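/- arXiv:0709.2337 — 3 statements merged into one kernel-verified Lean document; each statement's English description precedes it below -/
import Mathlib

section
/- Let Ω ⊆ 𝔻 be open and convex, let f : Ω → ℝ be positive and twice continuously differentiable, and let w : Ω → 𝔻 be continuously differentiable and satisfy w_z̄ = −(f_z/f)·w̄ on Ω. Fix z₀ ∈ Ω and define, for z ∈ Ω, W(z) = f(z)·Re∫_{[z₀,z]} (w(ζ)/f(ζ)) dζ + (j/f(z))·Im∫_{[z₀,z]} f(ζ)w(ζ) dζ, where the integrals are taken along the straight segment from z₀ to z, i.e. ∫_{[z₀,z]} h dζ = ∫₀¹ h(z₀ + s(z−z₀))·(z−z₀) ds with hyperbolic multiplication. Then W satisfies the main Vekua equation W_z̄ = (f_z̄/f)·W̄ on Ω. -/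
noncomputable section

open Filter Topology MeasureTheory

/-- Hyperbolic (duplex) numbers 𝔻, modeled as pairs `(Re z, Im z)` with `j ^ 2 = 1`. -/
abbrev Hyp : Type := ℝ × ℝ

/-- Real part of a hyperbolic number. -/
def hre (a : Hyp) : ℝ := a.1

/-- Imaginary part of a hyperbolic number. -/
def him (a : Hyp) : ℝ := a.2

/-- The hyperbolic imaginary unit `j`. -/
def hj : Hyp := (0, 1)

/-- Hyperbolic multiplication: `(x+tj)(x'+t'j) = (xx'+tt') + (xt'+tx')j`. -/
def hmul (a b : Hyp) : Hyp := (a.1 * b.1 + a.2 * b.2, a.1 * b.2 + a.2 * b.1)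

/-- Hyperbolic conjugation: `conj (x+tj) = x - tj`. -/
def hconj (a : Hyp) : Hyp := (a.1, -a.2)

/-- Invertibility of a hyperbolic number: `x² ≠ t²`. -/
def IsInv (a : Hyp) : Prop := a.1 ^ 2 ≠ a.2 ^ 2

/-- Hyperbolic inverse `z⁻¹ = z̄ / |z|²` with `|z|² = x² - t²`. -/
def hinv (a : Hyp) : Hyp := (a.1 / (a.1 ^ 2 - a.2 ^ 2), -a.2 / (a.1 ^ 2 - a.2 ^ 2))

/-- Hyperbolic division. -/
def hdiv (a b : Hyp) : Hyp := hmul a (hinv b)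

/-- Partial derivative in the first (`x`) variable. -/
def pdx (g : Hyp → ℝ) (p : Hyp) : ℝ := deriv (fun s => g (s, p.2)) p.1

/-- Partial derivative in the second (`t`) variable. -/
def pdt (g : Hyp → ℝ) (p : Hyp) : ℝ := deriv (fun s => g (p.1, s)) p.2

/-- The wave operator `□g = g_xx - g_tt`. -/
def waveOp (g : Hyp → ℝ) (p : Hyp) : ℝ := pdx (pdx g) p - pdt (pdt g) p

/-- `w_z = ½(∂_x + j ∂_t) w = ½((u_x+v_t) + (v_x+u_t)j)` for a 𝔻-valued `w = u + jv`. -/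
def dz (w : Hyp → Hyp) (p : Hyp) : Hyp :=
  ((pdx (fun q => (w q).1) p + pdt (fun q => (w q).2) p) / 2,
   (pdx (fun q => (w q).2) p + pdt (fun q => (w q).1) p) / 2)

/-- `w_z̄ = ½(∂_x - j ∂_t) w = ½((u_x-v_t) + (v_x-u_t)j)` for a 𝔻-valued `w = u + jv`. -/
def dzbar (w : Hyp → Hyp) (p : Hyp) : Hyp :=
  ((pdx (fun q => (w q).1) p - pdt (fun q => (w q).2) p) / 2,
   (pdx (fun q => (w q).2) p - pdt (fun q => (w q).1) p) / 2)

/-- `f_z = ½(f_x + j f_t)` for a real-valued `f`. -/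
def rz (f : Hyp → ℝ) (p : Hyp) : Hyp := (pdx f p / 2, pdt f p / 2)

/-- `f_z̄ = ½(f_x - j f_t)` for a real-valued `f`. -/
def rzbar (f : Hyp → ℝ) (p : Hyp) : Hyp := (pdx f p / 2, -(pdt f p) / 2)

/-- 𝔻-differentiability at `z₀`: the difference quotient `(f z - f z₀)·(z - z₀)⁻¹`
tends to `d` as `z → z₀` through points with `z - z₀` invertible. -/
def HasHDerivAt (f : Hyp → Hyp) (d : Hyp) (z₀ : Hyp) : Prop :=
  Filter.Tendsto (fun z => hmul (f z - f z₀) (hinv (z - z₀)))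
    (nhdsWithin z₀ {z | IsInv (z - z₀)}) (nhds d)

/-- `F Ḡ - F̄ G`. -/
def pairDenom (F G : Hyp → Hyp) (z : Hyp) : Hyp :=
  hmul (F z) (hconj (G z)) - hmul (hconj (F z)) (G z)

/-- Characteristic coefficient `a_(F,G) = -(F̄ G_z̄ - F_z̄ Ḡ)/(F Ḡ - F̄ G)`. -/
def aFG (F G : Hyp → Hyp) (z : Hyp) : Hyp :=
  - hdiv (hmul (hconj (F z)) (dzbar G z) - hmul (dzbar F z) (hconj (G z))) (pairDenom F G z)

/-- Characteristic coefficient `b_(F,G) = (F G_z̄ - F_z̄ G)/(F Ḡ - F̄ G)`. -/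
def bFG (F G : Hyp → Hyp) (z : Hyp) : Hyp :=
  hdiv (hmul (F z) (dzbar G z) - hmul (dzbar F z) (G z)) (pairDenom F G z)

/-- Characteristic coefficient `A_(F,G) = -(F̄ G_z - F_z Ḡ)/(F Ḡ - F̄ G)`. -/
def AFG (F G : Hyp → Hyp) (z : Hyp) : Hyp :=
  - hdiv (hmul (hconj (F z)) (dz G z) - hmul (dz F z) (hconj (G z))) (pairDenom F G z)

/-- Characteristic coefficient `B_(F,G) = (F G_z - F_z G)/(F Ḡ - F̄ G)`. -/
def BFG (F G : Hyp → Hyp) (z : Hyp) : Hyp :=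
  hdiv (hmul (F z) (dz G z) - hmul (dz F z) (G z)) (pairDenom F G z)

/-- A generating pair on `Ω`: twice continuously differentiable `F, G` with `Im(F̄G) ≠ 0`. -/
def IsGenPair (F G : Hyp → Hyp) (Ω : Set Hyp) : Prop :=
  ContDiffOn ℝ 2 F Ω ∧ ContDiffOn ℝ 2 G Ω ∧ ∀ z ∈ Ω, him (hmul (hconj (F z)) (G z)) ≠ 0

/-- The idempotent `e₁ = (1+j)/2`. -/
def e1 : Hyp := (1/2, 1/2)

/-- The idempotent `e₂ = (1-j)/2`. -/
def e2 : Hyp := (1/2, -1/2)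

/-- Contour integral `∮_{∂R} h dz` over the counterclockwise boundary of the rectangle
`[x₁,x₂] × [t₁,t₂]`, with hyperbolic multiplication (`dz = dx` on horizontal sides,
`dz = j dt` on vertical sides). -/
def rectContourInt (h : Hyp → Hyp) (x₁ x₂ t₁ t₂ : ℝ) : Hyp :=
  ((∫ x in x₁..x₂, h (x, t₁)) - ∫ x in x₁..x₂, h (x, t₂)) +
    hmul hj ((∫ t in t₁..t₂, h (x₂, t)) - ∫ t in t₁..t₂, h (x₁, t))

/-- Integral `∫_{[z₀,z]} h dζ` along the straight segment from `z₀` to `z`,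
with hyperbolic multiplication. -/
def segInt (h : Hyp → Hyp) (z₀ z : Hyp) : Hyp :=
  ∫ s in (0:ℝ)..1, hmul (h (z₀ + s • (z - z₀))) (z - z₀)

/-- Natural powers in 𝔻. -/
def hpow (a : Hyp) : ℕ → Hyp
  | 0 => (1, 0)
  | n + 1 => hmul a (hpow a n)

/-- Integer powers in 𝔻 (for invertible base). -/
def hzpow (a : Hyp) : ℤ → Hyp
  | Int.ofNat n => hpow a n
  | Int.negSucc n => hinv (hpow a (n + 1))

open Metric

-- auxiliary definitions and lemmas
def lineφ (u v : Hyp → ℝ) (z₀ z : Hyp) : ℝ :=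
  ∫ s in (0:ℝ)..1, (u (z₀ + s • (z - z₀)) * (z.1 - z₀.1) + v (z₀ + s • (z - z₀)) * (z.2 - z₀.2))

lemma clm_apply_pair (T : Hyp →L[ℝ] ℝ) (p : Hyp) :
    T p = p.1 * T (1, 0) + p.2 * T (0, 1) := by
  have hp : p = p.1 • ((1:ℝ), (0:ℝ)) + p.2 • ((0:ℝ), (1:ℝ)) := by
    ext <;> simp
  conv_lhs => rw [hp]
  rw [T.map_add, T.map_smul, T.map_smul]
  simp [smul_eq_mul]

lemma pdx_of_hasFDerivAt {g : Hyp → ℝ} {L : Hyp →L[ℝ] ℝ} {p : Hyp}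
    (h : HasFDerivAt g L p) : pdx g p = L (1, 0) := by
  have h1 : HasDerivAt (fun s : ℝ => ((s, p.2) : Hyp)) ((1:ℝ), (0:ℝ)) p.1 :=
    (hasDerivAt_id p.1).prodMk (hasDerivAt_const p.1 p.2)
  have h2 : HasFDerivAt g L (p.1, p.2) := by simpa using h
  exact (h2.comp_hasDerivAt p.1 h1).deriv

lemma pdt_of_hasFDerivAt {g : Hyp → ℝ} {L : Hyp →L[ℝ] ℝ} {p : Hyp}
    (h : HasFDerivAt g L p) : pdt g p = L (0, 1) := by
  have h1 : HasDerivAt (fun s : ℝ => ((p.1, s) : Hyp)) ((0:ℝ), (1:ℝ)) p.2 :=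
    (hasDerivAt_const p.2 p.1).prodMk (hasDerivAt_id p.2)
  have h2 : HasFDerivAt g L (p.1, p.2) := by simpa using h
  exact (h2.comp_hasDerivAt p.2 h1).deriv

lemma pdx_congr {g g' : Hyp → ℝ} {U : Set Hyp} (hU : IsOpen U) {p : Hyp} (hp : p ∈ U)
    (h : ∀ q ∈ U, g q = g' q) : pdx g p = pdx g' p := by
  apply Filter.EventuallyEq.deriv_eq
  have hpre : IsOpen ((fun s : ℝ => ((s, p.2) : Hyp)) ⁻¹' U) :=
    hU.preimage (by fun_prop)
  have hmem : p.1 ∈ (fun s : ℝ => ((s, p.2) : Hyp)) ⁻¹' U := by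
    simpa using hp
  filter_upwards [hpre.mem_nhds hmem] with s hs using h _ hs

lemma pdt_congr {g g' : Hyp → ℝ} {U : Set Hyp} (hU : IsOpen U) {p : Hyp} (hp : p ∈ U)
    (h : ∀ q ∈ U, g q = g' q) : pdt g p = pdt g' p := by
  apply Filter.EventuallyEq.deriv_eq
  have hpre : IsOpen ((fun s : ℝ => ((p.1, s) : Hyp)) ⁻¹' U) :=
    hU.preimage (by fun_prop)
  have hmem : p.2 ∈ (fun s : ℝ => ((p.1, s) : Hyp)) ⁻¹' U := by
    simpa using hp
  filter_upwards [hpre.mem_nhds hmem] with s hs using h _ hs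

lemma segInt_pair_eq {Ω : Set Hyp} (hconv : Convex ℝ Ω) {u v : Hyp → ℝ}
    (hu : ContinuousOn u Ω) (hv : ContinuousOn v Ω)
    {z₀ z : Hyp} (hz₀ : z₀ ∈ Ω) (hz : z ∈ Ω) :
    segInt (fun ζ => ((u ζ, v ζ) : Hyp)) z₀ z =
      (lineφ u v z₀ z, lineφ v u z₀ z) := by
  have hmem : ∀ s ∈ Set.Icc (0:ℝ) 1, z₀ + s • (z - z₀) ∈ Ω := by
    intro s hs
    have h1 : (1 - s) • z₀ + s • z ∈ Ω := hconv hz₀ hz (by linarith [hs.2]) hs.1 (by ring)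
    have h2 : z₀ + s • (z - z₀) = (1 - s) • z₀ + s • z := by
      simp only [smul_sub, sub_smul, one_smul]; abel
    rw [h2]; exact h1
  have hγc : Continuous (fun s : ℝ => z₀ + s • (z - z₀)) := by fun_prop
  have hc : ContinuousOn (fun s : ℝ => ((u (z₀ + s • (z - z₀)), v (z₀ + s • (z - z₀))) : Hyp))
      (Set.Icc (0:ℝ) 1) :=
    ((hu.comp hγc.continuousOn hmem).prodMk (hv.comp hγc.continuousOn hmem))
  have hci : IntervalIntegrable
      (fun s => hmul ((u (z₀ + s • (z - z₀)), v (z₀ + s • (z - z₀))) : Hyp) (z - z₀))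
      volume 0 1 := by
    apply ContinuousOn.intervalIntegrable
    rw [Set.uIcc_of_le (by norm_num : (0:ℝ) ≤ 1)]
    simp only [hmul]
    exact ((hc.fst.mul continuousOn_const).add (hc.snd.mul continuousOn_const)).prodMk
      ((hc.fst.mul continuousOn_const).add (hc.snd.mul continuousOn_const))
  have h1 := (ContinuousLinearMap.fst ℝ ℝ ℝ).intervalIntegral_comp_comm hci
  have h2 := (ContinuousLinearMap.snd ℝ ℝ ℝ).intervalIntegral_comp_comm hci
  refine Prod.ext ?_ ?_
  · show (segInt _ z₀ z).1 = _
    unfold segInt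
    rw [show (∫ s in (0:ℝ)..1,
        hmul ((u (z₀ + s • (z - z₀)), v (z₀ + s • (z - z₀))) : Hyp) (z - z₀)).1 =
        (ContinuousLinearMap.fst ℝ ℝ ℝ) (∫ s in (0:ℝ)..1,
        hmul ((u (z₀ + s • (z - z₀)), v (z₀ + s • (z - z₀))) : Hyp) (z - z₀)) from rfl]
    rw [← h1]
    unfold lineφ
    apply intervalIntegral.integral_congr
    intro s _
    simp [hmul]
  · show (segInt _ z₀ z).2 = _
    unfold segInt
    rw [show (∫ s in (0:ℝ)..1,
        hmul ((u (z₀ + s • (z - z₀)), v (z₀ + s • (z - z₀))) : Hyp) (z - z₀)).2 =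
        (ContinuousLinearMap.snd ℝ ℝ ℝ) (∫ s in (0:ℝ)..1,
        hmul ((u (z₀ + s • (z - z₀)), v (z₀ + s • (z - z₀))) : Hyp) (z - z₀)) from rfl]
    rw [← h2]
    unfold lineφ
    apply intervalIntegral.integral_congr
    intro s _
    simp [hmul]
    ring

set_option maxHeartbeats 2000000 in
lemma lineφ_hasFDerivAt {Ω : Set Hyp} (hΩ : IsOpen Ω) (hconv : Convex ℝ Ω)
    {u v : Hyp → ℝ} {u' v' : Hyp → Hyp →L[ℝ] ℝ}
    (hu : ∀ p ∈ Ω, HasFDerivAt u (u' p) p) (hv : ∀ p ∈ Ω, HasFDerivAt v (v' p) p)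
    (hu' : ContinuousOn u' Ω) (hv' : ContinuousOn v' Ω)
    (hclosed : ∀ p ∈ Ω, u' p (0, 1) = v' p (1, 0))
    {z₀ z : Hyp} (hz₀ : z₀ ∈ Ω) (hz : z ∈ Ω) :
    ∃ L : Hyp →L[ℝ] ℝ, HasFDerivAt (lineφ u v z₀) L z ∧ L (1, 0) = u z ∧ L (0, 1) = v z := by
  classical
  obtain ⟨ε', hε', hball⟩ := Metric.isOpen_iff.1 hΩ z hz
  set ε : ℝ := ε' / 2 with hεdef
  have hε : 0 < ε := by positivity
  have hcb : closedBall z ε ⊆ Ω := fun x hx => hball (lt_of_le_of_lt (mem_closedBall.1 hx) (by linarith))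
  set γ : Hyp → ℝ → Hyp := fun x s => z₀ + s • (x - z₀) with hγdef
  have hγmem : ∀ x ∈ closedBall z ε, ∀ s ∈ Set.Icc (0:ℝ) 1, γ x s ∈ Ω := by
    intro x hx s hs
    have h1 : (1 - s) • z₀ + s • x ∈ Ω := hconv hz₀ (hcb hx) (by linarith [hs.2]) hs.1 (by ring)
    have h2 : γ x s = (1 - s) • z₀ + s • x := by
      simp only [hγdef, smul_sub, sub_smul, one_smul]
      abel
    rw [h2]; exact h1
  -- compact set containing all segments
  set K : Set Hyp := (fun q : ℝ × Hyp => γ q.2 q.1) '' (Set.Icc (0:ℝ) 1 ×ˢ closedBall z ε) with hKdef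
  have hKcomp : IsCompact K := by
    apply (isCompact_Icc.prod (isCompact_closedBall z ε)).image
    simp only [hγdef]
    fun_prop
  have hKsub : K ⊆ Ω := by
    rintro p ⟨⟨s, x⟩, ⟨hs, hx⟩, rfl⟩
    exact hγmem x hx s hs
  have hγK : ∀ x ∈ closedBall z ε, ∀ s ∈ Set.Icc (0:ℝ) 1, γ x s ∈ K := by
    intro x hx s hs; exact ⟨(s, x), ⟨hs, hx⟩, rfl⟩
  have hucont : ContinuousOn u Ω := fun p hp => ((hu p hp).differentiableAt.continuousAt).continuousWithinAt
  have hvcont : ContinuousOn v Ω := fun p hp => ((hv p hp).differentiableAt.continuousAt).continuousWithinAt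
  -- bounds on K
  obtain ⟨M1, hM1⟩ := hKcomp.exists_bound_of_continuousOn (hucont.mono hKsub)
  obtain ⟨M2, hM2⟩ := hKcomp.exists_bound_of_continuousOn (hvcont.mono hKsub)
  obtain ⟨M3, hM3⟩ := hKcomp.exists_bound_of_continuousOn (hu'.mono hKsub)
  obtain ⟨M4, hM4⟩ := hKcomp.exists_bound_of_continuousOn (hv'.mono hKsub)
  set M : ℝ := max (max M1 M2) (max M3 M4) ⊔ 0 with hMdef
  have hM0 : 0 ≤ M := le_max_right _ _
  have hMu : ∀ p ∈ K, |u p| ≤ M := fun p hp => le_trans (by simpa using hM1 p hp)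
    (le_trans (le_max_left M1 M2) (le_trans (le_max_left _ _) (le_max_left _ _)))
  have hMv : ∀ p ∈ K, |v p| ≤ M := fun p hp => le_trans (by simpa using hM2 p hp)
    (le_trans (le_max_right M1 M2) (le_trans (le_max_left _ _) (le_max_left _ _)))
  have hMu' : ∀ p ∈ K, ‖u' p‖ ≤ M := fun p hp => le_trans (hM3 p hp)
    (le_trans (le_max_left M3 M4) (le_trans (le_max_right _ _) (le_max_left _ _)))
  have hMv' : ∀ p ∈ K, ‖v' p‖ ≤ M := fun p hp => le_trans (hM4 p hp)
    (le_trans (le_max_right M3 M4) (le_trans (le_max_right _ _) (le_max_left _ _)))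
  set R : ℝ := ‖z - z₀‖ + ε with hRdef
  have hR0 : 0 ≤ R := by positivity
  have hxR : ∀ x ∈ ball z ε, ‖x - z₀‖ ≤ R := by
    intro x hx
    calc ‖x - z₀‖ = ‖(x - z) + (z - z₀)‖ := by ring_nf
      _ ≤ ‖x - z‖ + ‖z - z₀‖ := norm_add_le _ _
      _ ≤ ε + ‖z - z₀‖ := by
          have := mem_ball.1 hx
          rw [← dist_eq_norm] at *
          linarith [le_of_lt this]
      _ = R := by rw [hRdef]; ring
  -- the integrand and its derivative in the parameter
  set fstL : Hyp →L[ℝ] ℝ := ContinuousLinearMap.fst ℝ ℝ ℝ with hfstdef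
  set sndL : Hyp →L[ℝ] ℝ := ContinuousLinearMap.snd ℝ ℝ ℝ with hsnddef
  set F : Hyp → ℝ → ℝ := fun x s => u (γ x s) * (x.1 - z₀.1) + v (γ x s) * (x.2 - z₀.2) with hFdef
  set F' : Hyp → ℝ → Hyp →L[ℝ] ℝ := fun x s =>
    (u (γ x s) • fstL + (x.1 - z₀.1) • (s • u' (γ x s))) +
    (v (γ x s) • sndL + (x.2 - z₀.2) • (s • v' (γ x s))) with hF'def
  have hιIcc : Set.uIoc (0:ℝ) 1 ⊆ Set.Icc (0:ℝ) 1 := by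
    rw [Set.uIoc_of_le (by norm_num : (0:ℝ) ≤ 1)]
    exact Set.Ioc_subset_Icc_self
  have hγcont : ∀ x : Hyp, Continuous (fun s => γ x s) := by
    intro x; simp only [hγdef]; fun_prop
  have hFcont : ∀ x ∈ closedBall z ε, ContinuousOn (F x) (Set.Icc (0:ℝ) 1) := by
    intro x hx
    have h1 : ContinuousOn (fun s => u (γ x s)) (Set.Icc (0:ℝ) 1) :=
      hucont.comp (hγcont x).continuousOn (fun s hs => hγmem x hx s hs)
    have h2 : ContinuousOn (fun s => v (γ x s)) (Set.Icc (0:ℝ) 1) :=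
      hvcont.comp (hγcont x).continuousOn (fun s hs => hγmem x hx s hs)
    exact (h1.mul continuousOn_const).add (h2.mul continuousOn_const)
  have hzball : z ∈ closedBall z ε := mem_closedBall_self hε.le
  -- differentiability in the parameter
  have hdiff : ∀ s ∈ Set.uIoc (0:ℝ) 1, ∀ x ∈ ball z ε, HasFDerivAt (fun x => F x s) (F' x s) x := by
    intro s hs x hx
    have hmem : γ x s ∈ Ω := hγmem x (ball_subset_closedBall hx) s (hιIcc hs)
    have hγd : HasFDerivAt (fun y => γ y s) (s • ContinuousLinearMap.id ℝ Hyp) x := by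
      have : HasFDerivAt (fun y : Hyp => z₀ + s • (y - z₀))
          (s • ContinuousLinearMap.id ℝ Hyp) x :=
        (((hasFDerivAt_id x).sub_const z₀).const_smul s).const_add z₀
      exact this
    have hcomp : ∀ (g : Hyp → ℝ) (g' : Hyp → Hyp →L[ℝ] ℝ), (∀ p ∈ Ω, HasFDerivAt g (g' p) p) →
        HasFDerivAt (fun y => g (γ y s)) (s • g' (γ x s)) x := by
      intro g g' hg
      have := (hg _ hmem).comp x hγd
      have heq : (g' (γ x s)).comp (s • ContinuousLinearMap.id ℝ Hyp) = s • g' (γ x s) :=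
        ContinuousLinearMap.ext fun e => by simp
      rw [heq] at this
      exact this
    have h1 : HasFDerivAt (fun y : Hyp => y.1 - z₀.1) fstL x := (hasFDerivAt_fst).sub_const _
    have h2 : HasFDerivAt (fun y : Hyp => y.2 - z₀.2) sndL x := (hasFDerivAt_snd).sub_const _
    exact ((hcomp u u' hu).mul h1).add ((hcomp v v' hv).mul h2)
  -- bound
  set C : ℝ := (M + R * M) + (M + R * M) with hCdef
  have hbound : ∀ s ∈ Set.uIoc (0:ℝ) 1, ∀ x ∈ ball z ε, ‖F' x s‖ ≤ C := by
    intro s hs x hx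
    have hsIcc := hιIcc hs
    have hmemK : γ x s ∈ K := hγK x (ball_subset_closedBall hx) s hsIcc
    have hs1 : |s| ≤ 1 := by
      rw [abs_le]; exact ⟨by linarith [hsIcc.1], by linarith [hsIcc.2]⟩
    have hx1 : |x.1 - z₀.1| ≤ R := by
      have : |(x - z₀).1| ≤ ‖x - z₀‖ := by
        simpa using norm_fst_le (x - z₀)
      simpa using le_trans this (hxR x hx)
    have hx2 : |x.2 - z₀.2| ≤ R := by
      have : |(x - z₀).2| ≤ ‖x - z₀‖ := by
        simpa using norm_snd_le (x - z₀)
      simpa using le_trans this (hxR x hx)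
    have key : ∀ (a : ℝ) (T : Hyp →L[ℝ] ℝ), |a| ≤ R → ‖T‖ ≤ M →
        ‖a • (s • T)‖ ≤ R * M := by
      intro a T ha hT
      calc ‖a • (s • T)‖ ≤ ‖a‖ * ‖s • T‖ := ContinuousLinearMap.opNorm_smul_le _ _
        _ ≤ ‖a‖ * (‖s‖ * ‖T‖) := by
            have := ContinuousLinearMap.opNorm_smul_le s T
            have h0 : (0:ℝ) ≤ ‖a‖ := norm_nonneg _
            nlinarith [norm_nonneg (s • T)]
        _ ≤ R * (1 * M) := by
            apply mul_le_mul (by simpa [Real.norm_eq_abs] using ha) _ (by positivity) hR0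
            exact mul_le_mul (by simpa [Real.norm_eq_abs] using hs1) hT
              (norm_nonneg _) zero_le_one
        _ = R * M := by ring
    have key0 : ∀ (a : ℝ) (T : Hyp →L[ℝ] ℝ), |a| ≤ M → ‖T‖ ≤ 1 → ‖a • T‖ ≤ M := by
      intro a T ha hT
      calc ‖a • T‖ ≤ ‖a‖ * ‖T‖ := ContinuousLinearMap.opNorm_smul_le _ _
        _ ≤ M * 1 := mul_le_mul (by simpa [Real.norm_eq_abs] using ha) hT (norm_nonneg _) hM0
        _ = M := mul_one M
    have e1 : ‖u (γ x s) • fstL‖ ≤ M :=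
      key0 _ _ (hMu _ hmemK) (ContinuousLinearMap.norm_fst_le ℝ ℝ ℝ)
    have e2 : ‖(x.1 - z₀.1) • (s • u' (γ x s))‖ ≤ R * M :=
      key _ _ hx1 (hMu' _ hmemK)
    have e3 : ‖v (γ x s) • sndL‖ ≤ M :=
      key0 _ _ (hMv _ hmemK) (ContinuousLinearMap.norm_snd_le ℝ ℝ ℝ)
    have e4 : ‖(x.2 - z₀.2) • (s • v' (γ x s))‖ ≤ R * M :=
      key _ _ hx2 (hMv' _ hmemK)
    calc ‖F' x s‖ ≤ ‖u (γ x s) • fstL + (x.1 - z₀.1) • (s • u' (γ x s))‖ +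
          ‖v (γ x s) • sndL + (x.2 - z₀.2) • (s • v' (γ x s))‖ := norm_add_le _ _
      _ ≤ (M + R * M) + (M + R * M) := by
          gcongr
          · exact le_trans (norm_add_le _ _) (by linarith)
          · exact le_trans (norm_add_le _ _) (by linarith)
      _ = C := hCdef.symm
  -- continuity data along the segment from z
  have hγz : ContinuousOn (fun s => γ z s) (Set.Icc (0:ℝ) 1) := (hγcont z).continuousOn
  have hmaps : ∀ s ∈ Set.Icc (0:ℝ) 1, γ z s ∈ Ω := hγmem z hzball
  have c1 : ContinuousOn (fun s => u (γ z s)) (Set.Icc (0:ℝ) 1) := hucont.comp hγz hmaps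
  have c2 : ContinuousOn (fun s => v (γ z s)) (Set.Icc (0:ℝ) 1) := hvcont.comp hγz hmaps
  have c3 : ContinuousOn (fun s => u' (γ z s)) (Set.Icc (0:ℝ) 1) := hu'.comp hγz hmaps
  have c4 : ContinuousOn (fun s => v' (γ z s)) (Set.Icc (0:ℝ) 1) := hv'.comp hγz hmaps
  have hF'cont : ContinuousOn (F' z) (Set.Icc (0:ℝ) 1) :=
    ((c1.smul (continuousOn_const (c := fstL))).add
        ((continuousOn_const (c := z.1 - z₀.1)).smul (continuousOn_id.smul c3))).add
      ((c2.smul (continuousOn_const (c := sndL))).add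
        ((continuousOn_const (c := z.2 - z₀.2)).smul (continuousOn_id.smul c4)))
  have huIcc : Set.uIcc (0:ℝ) 1 = Set.Icc (0:ℝ) 1 := Set.uIcc_of_le (by norm_num)
  have hF'int : IntervalIntegrable (F' z) volume 0 1 :=
    (hF'cont.mono (by rw [huIcc])).intervalIntegrable
  have hγz1 : γ z 1 = z := by
    simp only [hγdef, one_smul]; abel
  have hγderiv : ∀ s : ℝ, HasDerivAt (fun s => γ z s) (z - z₀) s := by
    intro s
    have : HasDerivAt (fun s : ℝ => z₀ + s • (z - z₀)) ((1:ℝ) • (z - z₀)) s :=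
      ((hasDerivAt_id s).smul_const (z - z₀)).const_add z₀
    rw [one_smul] at this; exact this
  -- apply the parametric differentiation theorem
  have hmain : HasFDerivAt (fun x => ∫ s in (0:ℝ)..1, F x s)
      (∫ s in (0:ℝ)..1, F' z s) z := by
    apply intervalIntegral.hasFDerivAt_integral_of_dominated_of_fderiv_le
      (bound := fun _ => C) (Metric.ball_mem_nhds z hε)
    · filter_upwards [Metric.closedBall_mem_nhds z hε] with x hx
      exact ((hFcont x hx).mono hιIcc).aestronglyMeasurable measurableSet_uIoc
    · exact ((hFcont z hzball).mono (by rw [huIcc])).intervalIntegrable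
    · exact (hF'cont.mono hιIcc).aestronglyMeasurable measurableSet_uIoc
    · exact Filter.Eventually.of_forall hbound
    · exact intervalIntegrable_const
    · exact Filter.Eventually.of_forall hdiff
  have hL : lineφ u v z₀ = fun x => ∫ s in (0:ℝ)..1, F x s := rfl
  refine ⟨∫ s in (0:ℝ)..1, F' z s, by rw [hL]; exact hmain, ?_, ?_⟩
  -- value at (1,0)
  · rw [ContinuousLinearMap.intervalIntegral_apply hF'int]
    have hval : Set.EqOn (fun s => F' z s ((1:ℝ), (0:ℝ)))
        (fun s => u (γ z s) + s * (u' (γ z s) (z - z₀))) (Set.uIcc (0:ℝ) 1) := by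
      intro s hs
      rw [huIcc] at hs
      have hmem : γ z s ∈ Ω := hγmem z hzball s hs
      have happ : u' (γ z s) (z - z₀) =
          (z.1 - z₀.1) * u' (γ z s) (1, 0) + (z.2 - z₀.2) * u' (γ z s) (0, 1) := by
        rw [clm_apply_pair (u' (γ z s)) (z - z₀)]
        simp
      simp only [hF'def, ContinuousLinearMap.add_apply, ContinuousLinearMap.smul_apply,
        hfstdef, hsnddef, ContinuousLinearMap.coe_fst', ContinuousLinearMap.coe_snd',
        smul_eq_mul]
      rw [← hclosed _ hmem, happ]
      ring
    have hint2 : IntervalIntegrable (fun s => u (γ z s) + s * (u' (γ z s) (z - z₀)))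
        volume 0 1 := by
      apply ContinuousOn.intervalIntegrable
      rw [huIcc]
      exact c1.add (continuousOn_id.mul (c3.clm_apply continuousOn_const))
    have hderiv : ∀ s ∈ Set.uIcc (0:ℝ) 1,
        HasDerivAt (fun s => s * u (γ z s)) (u (γ z s) + s * (u' (γ z s) (z - z₀))) s := by
      intro s hs
      rw [huIcc] at hs
      have hmem : γ z s ∈ Ω := hγmem z hzball s hs
      have hcomp : HasDerivAt (fun s => u (γ z s)) (u' (γ z s) (z - z₀)) s :=
        (hu _ hmem).comp_hasDerivAt s (hγderiv s)
      have := (hasDerivAt_id' (x := s)).fun_mul hcomp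
      simpa using this
    calc ∫ s in (0:ℝ)..1, F' z s ((1:ℝ), (0:ℝ))
        = ∫ s in (0:ℝ)..1, (u (γ z s) + s * (u' (γ z s) (z - z₀))) :=
          intervalIntegral.integral_congr hval
      _ = (fun s : ℝ => s * u (γ z s)) 1 - (fun s : ℝ => s * u (γ z s)) 0 :=
          intervalIntegral.integral_eq_sub_of_hasDerivAt hderiv hint2
      _ = u z := by simp [hγz1]
  -- value at (0,1)
  · rw [ContinuousLinearMap.intervalIntegral_apply hF'int]
    have hval : Set.EqOn (fun s => F' z s ((0:ℝ), (1:ℝ)))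
        (fun s => v (γ z s) + s * (v' (γ z s) (z - z₀))) (Set.uIcc (0:ℝ) 1) := by
      intro s hs
      rw [huIcc] at hs
      have hmem : γ z s ∈ Ω := hγmem z hzball s hs
      have happ : v' (γ z s) (z - z₀) =
          (z.1 - z₀.1) * v' (γ z s) (1, 0) + (z.2 - z₀.2) * v' (γ z s) (0, 1) := by
        rw [clm_apply_pair (v' (γ z s)) (z - z₀)]
        simp
      simp only [hF'def, ContinuousLinearMap.add_apply, ContinuousLinearMap.smul_apply,
        hfstdef, hsnddef, ContinuousLinearMap.coe_fst', ContinuousLinearMap.coe_snd',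
        smul_eq_mul]
      rw [hclosed _ hmem, happ]
      ring
    have hint2 : IntervalIntegrable (fun s => v (γ z s) + s * (v' (γ z s) (z - z₀)))
        volume 0 1 := by
      apply ContinuousOn.intervalIntegrable
      rw [huIcc]
      exact c2.add (continuousOn_id.mul (c4.clm_apply continuousOn_const))
    have hderiv : ∀ s ∈ Set.uIcc (0:ℝ) 1,
        HasDerivAt (fun s => s * v (γ z s)) (v (γ z s) + s * (v' (γ z s) (z - z₀))) s := by
      intro s hs
      rw [huIcc] at hs
      have hmem : γ z s ∈ Ω := hγmem z hzball s hs
      have hcomp : HasDerivAt (fun s => v (γ z s)) (v' (γ z s) (z - z₀)) s :=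
        (hv _ hmem).comp_hasDerivAt s (hγderiv s)
      have := (hasDerivAt_id' (x := s)).fun_mul hcomp
      simpa using this
    calc ∫ s in (0:ℝ)..1, F' z s ((0:ℝ), (1:ℝ))
        = ∫ s in (0:ℝ)..1, (v (γ z s) + s * (v' (γ z s) (z - z₀))) :=
          intervalIntegral.integral_congr hval
      _ = (fun s : ℝ => s * v (γ z s)) 1 - (fun s : ℝ => s * v (γ z s)) 0 :=
          intervalIntegral.integral_eq_sub_of_hasDerivAt hderiv hint2
      _ = v z := by simp [hγz1]

set_option maxHeartbeats 4000000 in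
/-- the `(F,G)`-antiderivative. If `w ∈ C¹(Ω)` solves `w_z̄ = −(f_z/f)w̄` on
an open convex `Ω` and `W(z) = f(z)·Re∫_{[z₀,z]}(w/f) dζ + (j/f(z))·Im∫_{[z₀,z]} f·w dζ`,
then `W` solves the main Vekua equation `W_z̄ = (f_z̄/f)W̄` on `Ω`. -/
theorem antiderivative_solves_main_vekua (Ω : Set Hyp) (hΩ : IsOpen Ω) (hconv : Convex ℝ Ω)
    (f : Hyp → ℝ) (hf : ContDiffOn ℝ 2 f Ω) (hfpos : ∀ p ∈ Ω, 0 < f p)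
    (w : Hyp → Hyp) (hw : ContDiffOn ℝ 1 w Ω)
    (hVekua : ∀ p ∈ Ω, dzbar w p = - hmul (hdiv (rz f p) (f p, 0)) (hconj (w p)))
    (z₀ : Hyp) (hz₀ : z₀ ∈ Ω)
    (W : Hyp → Hyp)
    (hWdef : ∀ z, W z =
      ((f z * hre (segInt (fun ζ => hdiv (w ζ) (f ζ, 0)) z₀ z),
        him (segInt (fun ζ => hmul ((f ζ, 0) : Hyp) (w ζ)) z₀ z) / f z) : Hyp)) :
    ∀ z ∈ Ω, dzbar W z = hmul (hdiv (rzbar f z) (f z, 0)) (hconj (W z)) := by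
  have hfne : ∀ p ∈ Ω, f p ≠ 0 := fun p hp => (hfpos p hp).ne'
  have hf1 : ContDiffOn ℝ 1 f Ω := hf.of_le one_le_two
  have hw1 : ContDiffOn ℝ 1 (fun q => (w q).1) Ω := contDiff_fst.comp_contDiffOn hw
  have hw2 : ContDiffOn ℝ 1 (fun q => (w q).2) Ω := contDiff_snd.comp_contDiffOn hw
  have hu1 : ContDiffOn ℝ 1 (fun q => (w q).1 / f q) Ω := hw1.div hf1 hfne
  have hu2 : ContDiffOn ℝ 1 (fun q => (w q).2 / f q) Ω := hw2.div hf1 hfne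
  have hq1 : ContDiffOn ℝ 1 (fun q => f q * (w q).1) Ω := hf1.mul hw1
  have hq2 : ContDiffOn ℝ 1 (fun q => f q * (w q).2) Ω := hf1.mul hw2
  have hD : ∀ (g : Hyp → ℝ), ContDiffOn ℝ 1 g Ω → ∀ p ∈ Ω, HasFDerivAt g (fderiv ℝ g p) p :=
    fun g hg p hp => ((hg.differentiableOn one_ne_zero).differentiableAt (hΩ.mem_nhds hp)).hasFDerivAt
  have hC : ∀ (g : Hyp → ℝ), ContDiffOn ℝ 1 g Ω → ContinuousOn (fderiv ℝ g) Ω :=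
    fun g hg => hg.continuousOn_fderiv_of_isOpen hΩ le_rfl
  have hinvf : ∀ p ∈ Ω, HasFDerivAt (fun q => (f q)⁻¹) (-((f p)^2)⁻¹ • fderiv ℝ f p) p :=
    fun p hp => (hasDerivAt_inv (hfne p hp)).comp_hasFDerivAt p (hD f hf1 p hp)
  -- explicit derivatives of the four auxiliary functions
  have hu1d : ∀ p ∈ Ω, HasFDerivAt (fun q => (w q).1 / f q)
      ((w p).1 • (-((f p)^2)⁻¹ • fderiv ℝ f p) +
        (f p)⁻¹ • fderiv ℝ (fun q => (w q).1) p) p := by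
    intro p hp
    have h := (hD _ hw1 p hp).mul (hinvf p hp)
    have heq : (fun q => (w q).1 / f q) = fun q => (w q).1 * (f q)⁻¹ :=
      funext fun q => div_eq_mul_inv _ _
    rw [heq]; exact h
  have hu2d : ∀ p ∈ Ω, HasFDerivAt (fun q => (w q).2 / f q)
      ((w p).2 • (-((f p)^2)⁻¹ • fderiv ℝ f p) +
        (f p)⁻¹ • fderiv ℝ (fun q => (w q).2) p) p := by
    intro p hp
    have h := (hD _ hw2 p hp).mul (hinvf p hp)
    have heq : (fun q => (w q).2 / f q) = fun q => (w q).2 * (f q)⁻¹ :=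
      funext fun q => div_eq_mul_inv _ _
    rw [heq]; exact h
  have hq1d : ∀ p ∈ Ω, HasFDerivAt (fun q => f q * (w q).1)
      (f p • fderiv ℝ (fun q => (w q).1) p + (w p).1 • fderiv ℝ f p) p :=
    fun p hp => (hD f hf1 p hp).mul (hD _ hw1 p hp)
  have hq2d : ∀ p ∈ Ω, HasFDerivAt (fun q => f q * (w q).2)
      (f p • fderiv ℝ (fun q => (w q).2) p + (w p).2 • fderiv ℝ f p) p :=
    fun p hp => (hD f hf1 p hp).mul (hD _ hw2 p hp)
  have hu1val : ∀ p ∈ Ω, ∀ e : Hyp, fderiv ℝ (fun q => (w q).1 / f q) p e =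
      (w p).1 * (-((f p)^2)⁻¹ * fderiv ℝ f p e) +
        (f p)⁻¹ * fderiv ℝ (fun q => (w q).1) p e := by
    intro p hp e
    rw [(hu1d p hp).fderiv]
    simp [smul_eq_mul]
  have hu2val : ∀ p ∈ Ω, ∀ e : Hyp, fderiv ℝ (fun q => (w q).2 / f q) p e =
      (w p).2 * (-((f p)^2)⁻¹ * fderiv ℝ f p e) +
        (f p)⁻¹ * fderiv ℝ (fun q => (w q).2) p e := by
    intro p hp e
    rw [(hu2d p hp).fderiv]
    simp [smul_eq_mul]
  have hq1val : ∀ p ∈ Ω, ∀ e : Hyp, fderiv ℝ (fun q => f q * (w q).1) p e =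
      f p * fderiv ℝ (fun q => (w q).1) p e + (w p).1 * fderiv ℝ f p e := by
    intro p hp e
    rw [(hq1d p hp).fderiv]
    simp [smul_eq_mul]
  have hq2val : ∀ p ∈ Ω, ∀ e : Hyp, fderiv ℝ (fun q => f q * (w q).2) p e =
      f p * fderiv ℝ (fun q => (w q).2) p e + (w p).2 * fderiv ℝ f p e := by
    intro p hp e
    rw [(hq2d p hp).fderiv]
    simp [smul_eq_mul]
  -- the Vekua equation in coordinates
  have hveq : ∀ p ∈ Ω,
      (fderiv ℝ (fun q => (w q).1) p (1, 0) - fderiv ℝ (fun q => (w q).2) p (0, 1)) * f p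
        = -(fderiv ℝ f p (1, 0) * (w p).1 - fderiv ℝ f p (0, 1) * (w p).2) ∧
      (fderiv ℝ (fun q => (w q).2) p (1, 0) - fderiv ℝ (fun q => (w q).1) p (0, 1)) * f p
        = fderiv ℝ f p (1, 0) * (w p).2 - fderiv ℝ f p (0, 1) * (w p).1 := by
    intro p hp
    have h := hVekua p hp
    simp only [dzbar, rz, hdiv, hmul, hinv, hconj, Prod.neg_mk, Prod.mk.injEq] at h
    rw [pdx_of_hasFDerivAt (hD _ hw1 p hp), pdt_of_hasFDerivAt (hD _ hw1 p hp),
        pdx_of_hasFDerivAt (hD _ hw2 p hp), pdt_of_hasFDerivAt (hD _ hw2 p hp),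
        pdx_of_hasFDerivAt (hD f hf1 p hp), pdt_of_hasFDerivAt (hD f hf1 p hp)] at h
    have hf0 := hfne p hp
    have key : f p / (f p ^ 2 - 0 ^ 2) = (f p)⁻¹ := by
      rw [show f p ^ 2 - 0 ^ 2 = f p * f p by ring]
      rw [div_mul_cancel_left₀ hf0]
    have key2 : -0 / (f p ^ 2 - 0 ^ 2) = (0:ℝ) := by simp
    rw [key, key2] at h
    obtain ⟨h1, h2⟩ := h
    constructor
    · field_simp at h1
      linear_combination h1
    · field_simp at h2
      apply mul_right_cancel₀ hf0
      linear_combination (f p) * h2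
  -- closedness of the two 1-forms
  have hclosedP : ∀ p ∈ Ω, fderiv ℝ (fun q => (w q).1 / f q) p (0, 1)
      = fderiv ℝ (fun q => (w q).2 / f q) p (1, 0) := by
    intro p hp
    rw [hu1val p hp, hu2val p hp]
    have h2 := (hveq p hp).2
    have hf0 := hfne p hp
    field_simp
    linear_combination -h2
  have hclosedQ : ∀ p ∈ Ω, fderiv ℝ (fun q => f q * (w q).2) p (0, 1)
      = fderiv ℝ (fun q => f q * (w q).1) p (1, 0) := by
    intro p hp
    rw [hq2val p hp, hq1val p hp]
    have h1 := (hveq p hp).1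
    have hf0 := hfne p hp
    linear_combination -h1
  intro z hz
  -- apply the fundamental lemma to both potentials
  obtain ⟨Lφ, hφd, hφx, hφt⟩ := lineφ_hasFDerivAt hΩ hconv
    (fun p hp => hD _ hu1 p hp) (fun p hp => hD _ hu2 p hp)
    (hC _ hu1) (hC _ hu2) hclosedP hz₀ hz
  obtain ⟨Lψ, hψd, hψx, hψt⟩ := lineφ_hasFDerivAt hΩ hconv
    (fun p hp => hD _ hq2 p hp) (fun p hp => hD _ hq1 p hp)
    (hC _ hq2) (hC _ hq1) hclosedQ hz₀ hz
  -- identification of W on Ω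
  have hWeq : ∀ q ∈ Ω, W q =
      ((f q * lineφ (fun q => (w q).1 / f q) (fun q => (w q).2 / f q) z₀ q,
        lineφ (fun q => f q * (w q).2) (fun q => f q * (w q).1) z₀ q / f q) : Hyp) := by
    intro q hq
    rw [hWdef q]
    have hd1 : (fun ζ => hdiv (w ζ) (f ζ, 0)) =
        fun ζ => (((w ζ).1 / f ζ, (w ζ).2 / f ζ) : Hyp) := by
      funext ζ
      rcases eq_or_ne (f ζ) 0 with h | h
      · refine Prod.ext ?_ ?_ <;> simp [hdiv, hinv, hmul, h]
      · refine Prod.ext ?_ ?_ <;>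
        · simp [hdiv, hinv, hmul]
          field_simp [h]
          try ring
    have hd2 : (fun ζ => hmul ((f ζ, 0) : Hyp) (w ζ)) =
        fun ζ => ((f ζ * (w ζ).1, f ζ * (w ζ).2) : Hyp) := by
      funext ζ
      refine Prod.ext ?_ ?_ <;> simp [hmul]
    rw [hd1, hd2,
      segInt_pair_eq hconv (hu1.continuousOn) (hu2.continuousOn) hz₀ hq,
      segInt_pair_eq hconv (hq1.continuousOn) (hq2.continuousOn) hz₀ hq]
    rfl
  -- derivatives of the components of W
  have hfd := hD f hf1 z hz
  have hW1d : HasFDerivAt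
      (fun q => f q * lineφ (fun q => (w q).1 / f q) (fun q => (w q).2 / f q) z₀ q)
      (f z • Lφ + (lineφ (fun q => (w q).1 / f q) (fun q => (w q).2 / f q) z₀ z) •
        fderiv ℝ f z) z := hfd.mul hφd
  have hW2d : HasFDerivAt
      (fun q => lineφ (fun q => f q * (w q).2) (fun q => f q * (w q).1) z₀ q / f q)
      ((lineφ (fun q => f q * (w q).2) (fun q => f q * (w q).1) z₀ z) •
        (-((f z)^2)⁻¹ • fderiv ℝ f z) + (f z)⁻¹ • Lψ) z := by
    have h := hψd.mul (hinvf z hz)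
    have heq : (fun q => lineφ (fun q => f q * (w q).2) (fun q => f q * (w q).1) z₀ q / f q)
        = fun q => lineφ (fun q => f q * (w q).2) (fun q => f q * (w q).1) z₀ q * (f q)⁻¹ :=
      funext fun q => div_eq_mul_inv _ _
    rw [heq]; exact h
  have e1 : pdx (fun q => (W q).1) z = pdx
      (fun q => f q * lineφ (fun q => (w q).1 / f q) (fun q => (w q).2 / f q) z₀ q) z :=
    pdx_congr hΩ hz (fun q hq => by rw [hWeq q hq])
  have e2 : pdt (fun q => (W q).1) z = pdt
      (fun q => f q * lineφ (fun q => (w q).1 / f q) (fun q => (w q).2 / f q) z₀ q) z :=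
    pdt_congr hΩ hz (fun q hq => by rw [hWeq q hq])
  have e3 : pdx (fun q => (W q).2) z = pdx
      (fun q => lineφ (fun q => f q * (w q).2) (fun q => f q * (w q).1) z₀ q / f q) z :=
    pdx_congr hΩ hz (fun q hq => by rw [hWeq q hq])
  have e4 : pdt (fun q => (W q).2) z = pdt
      (fun q => lineφ (fun q => f q * (w q).2) (fun q => f q * (w q).1) z₀ q / f q) z :=
    pdt_congr hΩ hz (fun q hq => by rw [hWeq q hq])
  have hf0 := hfne z hz
  simp only [dzbar]
  rw [e1, e2, e3, e4, pdx_of_hasFDerivAt hW1d, pdt_of_hasFDerivAt hW1d,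
    pdx_of_hasFDerivAt hW2d, pdt_of_hasFDerivAt hW2d, hWeq z hz]
  simp only [rzbar, hdiv, hinv, hmul, hconj]
  rw [pdx_of_hasFDerivAt hfd, pdt_of_hasFDerivAt hfd]
  simp only [ContinuousLinearMap.add_apply, ContinuousLinearMap.smul_apply, smul_eq_mul]
  rw [hφx, hφt, hψx, hψt]
  refine Prod.ext ?_ ?_ <;>
  · field_simp
    ring
end
end

section
/- Let Ω ⊆ ℝ² be open, let b = b₁ + jb₂ : Ω → 𝔻 be continuously differentiable with b_z real-valued on Ω (i.e. Im(b_z) = 0, equivalently ∂_x b₂ + ∂_t b₁ = 0), and let W = u + jv : Ω → 𝔻 be twice continuously differentiable and satisfy W_z̄ = b·W̄ on Ω. Then u satisfies (¼)(u_xx − u_tt) = (b·b̄ + b_z)·u and v satisfies (¼)(v_xx − v_tt) = (b·b̄ − b_z)·v on Ω, where b·b̄ = b₁² − b₂² and b_z = ½(∂_x b₁ + ∂_t b₂) are real-valued. -/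
noncomputable section

open Filter Topology MeasureTheory

section Helpers

private lemma hasDerivAt_sliceX {g : Hyp → ℝ} {p : Hyp} (hg : DifferentiableAt ℝ g p) :
    HasDerivAt (fun s => g (s, p.2)) (fderiv ℝ g p ((1 : ℝ), (0 : ℝ))) p.1 := by
  have h1 : HasDerivAt (fun s : ℝ => ((s, p.2) : Hyp)) (((1 : ℝ), (0 : ℝ)) : Hyp) p.1 :=
    (hasDerivAt_id p.1).prodMk (hasDerivAt_const _ _)
  exact hg.hasFDerivAt.comp_hasDerivAt p.1 h1

private lemma hasDerivAt_sliceT {g : Hyp → ℝ} {p : Hyp} (hg : DifferentiableAt ℝ g p) :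
    HasDerivAt (fun s => g (p.1, s)) (fderiv ℝ g p ((0 : ℝ), (1 : ℝ))) p.2 := by
  have h1 : HasDerivAt (fun s : ℝ => ((p.1, s) : Hyp)) (((0 : ℝ), (1 : ℝ)) : Hyp) p.2 :=
    (hasDerivAt_const _ _).prodMk (hasDerivAt_id p.2)
  exact hg.hasFDerivAt.comp_hasDerivAt p.2 h1

private lemma pdx_eq {g : Hyp → ℝ} {p : Hyp} (hg : DifferentiableAt ℝ g p) :
    pdx g p = fderiv ℝ g p ((1 : ℝ), (0 : ℝ)) := (hasDerivAt_sliceX hg).deriv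

private lemma pdt_eq {g : Hyp → ℝ} {p : Hyp} (hg : DifferentiableAt ℝ g p) :
    pdt g p = fderiv ℝ g p ((0 : ℝ), (1 : ℝ)) := (hasDerivAt_sliceT hg).deriv

private lemma pdx_congr_s12 {g h : Hyp → ℝ} {p : Hyp} (he : g =ᶠ[nhds p] h) :
    pdx g p = pdx h p := by
  apply Filter.EventuallyEq.deriv_eq
  have ht : Filter.Tendsto (fun s : ℝ => ((s, p.2) : Hyp)) (nhds p.1) (nhds p) := by
    simpa using (continuous_id.prodMk continuous_const).tendsto p.1
  exact he.comp_tendsto ht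

private lemma pdt_congr_s12 {g h : Hyp → ℝ} {p : Hyp} (he : g =ᶠ[nhds p] h) :
    pdt g p = pdt h p := by
  apply Filter.EventuallyEq.deriv_eq
  have ht : Filter.Tendsto (fun s : ℝ => ((p.1, s) : Hyp)) (nhds p.2) (nhds p) := by
    simpa using (continuous_const.prodMk continuous_id).tendsto p.2
  exact he.comp_tendsto ht

private lemma pdx_neg (g : Hyp → ℝ) (p : Hyp) :
    pdx (fun q => -(g q)) p = -(pdx g p) := by
  simp only [pdx]
  exact deriv.neg

private lemma pdt_neg (g : Hyp → ℝ) (p : Hyp) :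
    pdt (fun q => -(g q)) p = -(pdt g p) := by
  simp only [pdt]
  exact deriv.neg

private lemma wave_core {u v b1 b2 : Hyp → ℝ} {p : Hyp}
    (hu : ContDiffAt ℝ 2 u p) (hv : ContDiffAt ℝ 2 v p)
    (hb1 : DifferentiableAt ℝ b1 p) (hb2 : DifferentiableAt ℝ b2 p)
    (hud : ∀ᶠ q in nhds p, DifferentiableAt ℝ u q)
    (hvd : ∀ᶠ q in nhds p, DifferentiableAt ℝ v q)
    (heq1 : ∀ᶠ q in nhds p, pdx u q - pdt v q = 2 * (b1 q * u q - b2 q * v q))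
    (heq2 : ∀ᶠ q in nhds p, pdx v q - pdt u q = 2 * (b2 q * u q - b1 q * v q))
    (hbz : pdx b2 p + pdt b1 p = 0) :
    waveOp u p / 4 = (b1 p ^ 2 - b2 p ^ 2 + (pdx b1 p + pdt b2 p) / 2) * u p := by
  have hu1 : DifferentiableAt ℝ u p := hu.differentiableAt two_ne_zero
  have hv1 : DifferentiableAt ℝ v p := hv.differentiableAt two_ne_zero
  have hAc : ContDiffAt ℝ 1 (fderiv ℝ u) p := hu.fderiv_right (by norm_num)
  have hBc : ContDiffAt ℝ 1 (fderiv ℝ v) p := hv.fderiv_right (by norm_num)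
  have hA : HasFDerivAt (fderiv ℝ u) (fderiv ℝ (fderiv ℝ u) p) p :=
    (hAc.differentiableAt one_ne_zero).hasFDerivAt
  have hB : HasFDerivAt (fderiv ℝ v) (fderiv ℝ (fderiv ℝ v) p) p :=
    (hBc.differentiableAt one_ne_zero).hasFDerivAt
  have symmA := hu.isSymmSndFDerivAt (by simp [minSmoothness_of_isRCLikeNormedField])
  have symmB := hv.isSymmSndFDerivAt (by simp [minSmoothness_of_isRCLikeNormedField])
  have hpux : ∀ᶠ q in nhds p, pdx u q = fderiv ℝ u q ((1 : ℝ), (0 : ℝ)) :=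
    hud.mono fun q hq => pdx_eq hq
  have hput : ∀ᶠ q in nhds p, pdt u q = fderiv ℝ u q ((0 : ℝ), (1 : ℝ)) :=
    hud.mono fun q hq => pdt_eq hq
  have hpvx : ∀ᶠ q in nhds p, pdx v q = fderiv ℝ v q ((1 : ℝ), (0 : ℝ)) :=
    hvd.mono fun q hq => pdx_eq hq
  have hpvt : ∀ᶠ q in nhds p, pdt v q = fderiv ℝ v q ((0 : ℝ), (1 : ℝ)) :=
    hvd.mono fun q hq => pdt_eq hq
  have hE1 : (fun q => fderiv ℝ u q ((1 : ℝ), (0 : ℝ)) - fderiv ℝ v q ((0 : ℝ), (1 : ℝ)))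
      =ᶠ[nhds p] fun q => 2 * (b1 q * u q - b2 q * v q) := by
    filter_upwards [heq1, hpux, hpvt] with q h h1 h2
    rw [← h1, ← h2]; exact h
  have hE2 : (fun q => fderiv ℝ v q ((1 : ℝ), (0 : ℝ)) - fderiv ℝ u q ((0 : ℝ), (1 : ℝ)))
      =ᶠ[nhds p] fun q => 2 * (b2 q * u q - b1 q * v q) := by
    filter_upwards [heq2, hpvx, hput] with q h h1 h2
    rw [← h1, ← h2]; exact h
  have hL1 := (hA.clm_apply (hasFDerivAt_const (((1 : ℝ), (0 : ℝ)) : Hyp) p)).sub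
    (hB.clm_apply (hasFDerivAt_const (((0 : ℝ), (1 : ℝ)) : Hyp) p))
  have hL2 := (hB.clm_apply (hasFDerivAt_const (((1 : ℝ), (0 : ℝ)) : Hyp) p)).sub
    (hA.clm_apply (hasFDerivAt_const (((0 : ℝ), (1 : ℝ)) : Hyp) p))
  have hR1 := ((hb1.hasFDerivAt.mul hu1.hasFDerivAt).sub
    (hb2.hasFDerivAt.mul hv1.hasFDerivAt)).const_mul (2 : ℝ)
  have hR2 := ((hb2.hasFDerivAt.mul hu1.hasFDerivAt).sub
    (hb1.hasFDerivAt.mul hv1.hasFDerivAt)).const_mul (2 : ℝ)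
  have key1 := hL1.unique (hR1.congr_of_eventuallyEq hE1)
  have key2 := hL2.unique (hR2.congr_of_eventuallyEq hE2)
  have k1x := DFunLike.congr_fun key1 (((1 : ℝ), (0 : ℝ)) : Hyp)
  have k2t := DFunLike.congr_fun key2 (((0 : ℝ), (1 : ℝ)) : Hyp)
  simp only [ContinuousLinearMap.sub_apply, ContinuousLinearMap.add_apply,
    ContinuousLinearMap.coe_comp', Function.comp_apply, ContinuousLinearMap.zero_apply,
    ContinuousLinearMap.flip_apply, ContinuousLinearMap.coe_smul', Pi.smul_apply,
    smul_eq_mul, map_zero, zero_add, add_zero] at k1x k2t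
  have e1p : fderiv ℝ u p ((1 : ℝ), (0 : ℝ)) - fderiv ℝ v p ((0 : ℝ), (1 : ℝ))
      = 2 * (b1 p * u p - b2 p * v p) := hE1.self_of_nhds
  have e2p : fderiv ℝ v p ((1 : ℝ), (0 : ℝ)) - fderiv ℝ u p ((0 : ℝ), (1 : ℝ))
      = 2 * (b2 p * u p - b1 p * v p) := hE2.self_of_nhds
  have sA := symmA (((1 : ℝ), (0 : ℝ)) : Hyp) (((0 : ℝ), (1 : ℝ)) : Hyp)
  have sB := symmB (((1 : ℝ), (0 : ℝ)) : Hyp) (((0 : ℝ), (1 : ℝ)) : Hyp)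
  -- second derivatives of u
  have hdx : DifferentiableAt ℝ (fun q => fderiv ℝ u q ((1 : ℝ), (0 : ℝ))) p :=
    (hA.clm_apply (hasFDerivAt_const _ _)).differentiableAt
  have hdt : DifferentiableAt ℝ (fun q => fderiv ℝ u q ((0 : ℝ), (1 : ℝ))) p :=
    (hA.clm_apply (hasFDerivAt_const _ _)).differentiableAt
  have wxx : pdx (pdx u) p
      = fderiv ℝ (fderiv ℝ u) p ((1 : ℝ), (0 : ℝ)) ((1 : ℝ), (0 : ℝ)) := by
    rw [pdx_congr_s12 hpux, pdx_eq hdx,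
      (hA.clm_apply (hasFDerivAt_const (((1 : ℝ), (0 : ℝ)) : Hyp) p)).fderiv]
    simp
  have wtt : pdt (pdt u) p
      = fderiv ℝ (fderiv ℝ u) p ((0 : ℝ), (1 : ℝ)) ((0 : ℝ), (1 : ℝ)) := by
    rw [pdt_congr_s12 hput, pdt_eq hdt,
      (hA.clm_apply (hasFDerivAt_const (((0 : ℝ), (1 : ℝ)) : Hyp) p)).fderiv]
    simp
  have hbx : pdx b1 p = fderiv ℝ b1 p ((1 : ℝ), (0 : ℝ)) := pdx_eq hb1
  have hbt : pdt b2 p = fderiv ℝ b2 p ((0 : ℝ), (1 : ℝ)) := pdt_eq hb2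
  have hbz' : fderiv ℝ b2 p ((1 : ℝ), (0 : ℝ)) + fderiv ℝ b1 p ((0 : ℝ), (1 : ℝ)) = 0 := by
    rw [← pdx_eq hb2, ← pdt_eq hb1]; exact hbz
  have hwave : waveOp u p = pdx (pdx u) p - pdt (pdt u) p := rfl
  rw [hwave, wxx, wtt, hbx, hbt]
  linear_combination (1 / 4 : ℝ) * k1x + (1 / 4 : ℝ) * k2t + (1 / 4 : ℝ) * sB
    + (b1 p / 2) * e1p - (b2 p / 2) * e2p - (v p / 2) * hbz'

end Helpers

/-- if `b = b₁ + jb₂ ∈ C¹(Ω)` has real-valued `b_z` (i.e. `∂_xb₂ + ∂_tb₁ = 0`)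
and `W = u + jv ∈ C²(Ω)` solves `W_z̄ = bW̄`, then `¼□u = (bb̄ + b_z)u` and
`¼□v = (bb̄ − b_z)v` on `Ω`, where `bb̄ = b₁² − b₂²` and `b_z = ½(∂_xb₁ + ∂_tb₂)`. -/
theorem vekua_real_imaginary_parts (Ω : Set Hyp) (hΩ : IsOpen Ω)
    (b : Hyp → Hyp) (hb : ContDiffOn ℝ 1 b Ω)
    (hbz_real : ∀ p ∈ Ω, pdx (fun q => (b q).2) p + pdt (fun q => (b q).1) p = 0)
    (W : Hyp → Hyp) (hW : ContDiffOn ℝ 2 W Ω)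
    (hVekua : ∀ p ∈ Ω, dzbar W p = hmul (b p) (hconj (W p))) :
    ∀ p ∈ Ω,
      waveOp (fun q => (W q).1) p / 4 =
        ((b p).1 ^ 2 - (b p).2 ^ 2 +
          (pdx (fun q => (b q).1) p + pdt (fun q => (b q).2) p) / 2) * (W p).1 ∧
      waveOp (fun q => (W q).2) p / 4 =
        ((b p).1 ^ 2 - (b p).2 ^ 2 -
          (pdx (fun q => (b q).1) p + pdt (fun q => (b q).2) p) / 2) * (W p).2 := by
  intro p hp
  have hmem : Ω ∈ nhds p := hΩ.mem_nhds hp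
  have hWp : ContDiffAt ℝ 2 W p := hW.contDiffAt hmem
  have hbp : ContDiffAt ℝ 1 b p := hb.contDiffAt hmem
  have hu : ContDiffAt ℝ 2 (fun q => (W q).1) p := (contDiff_fst.contDiffAt).comp p hWp
  have hv : ContDiffAt ℝ 2 (fun q => (W q).2) p := (contDiff_snd.contDiffAt).comp p hWp
  have hb1 : DifferentiableAt ℝ (fun q => (b q).1) p :=
    ((contDiff_fst.contDiffAt).comp p hbp).differentiableAt one_ne_zero
  have hb2 : DifferentiableAt ℝ (fun q => (b q).2) p :=
    ((contDiff_snd.contDiffAt).comp p hbp).differentiableAt one_ne_zero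
  have hud : ∀ᶠ q in nhds p, DifferentiableAt ℝ (fun q => (W q).1) q := by
    filter_upwards [hmem] with q hq
    exact ((contDiff_fst.contDiffAt).comp q (hW.contDiffAt (hΩ.mem_nhds hq))).differentiableAt
      two_ne_zero
  have hvd : ∀ᶠ q in nhds p, DifferentiableAt ℝ (fun q => (W q).2) q := by
    filter_upwards [hmem] with q hq
    exact ((contDiff_snd.contDiffAt).comp q (hW.contDiffAt (hΩ.mem_nhds hq))).differentiableAt
      two_ne_zero
  have heq1 : ∀ᶠ q in nhds p, pdx (fun r => (W r).1) q - pdt (fun r => (W r).2) q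
      = 2 * ((b q).1 * (W q).1 - (b q).2 * (W q).2) := by
    filter_upwards [hmem] with q hq
    have h := hVekua q hq
    rw [Prod.ext_iff] at h
    obtain ⟨h1, -⟩ := h
    simp only [dzbar, hmul, hconj] at h1
    linarith
  have heq2 : ∀ᶠ q in nhds p, pdx (fun r => (W r).2) q - pdt (fun r => (W r).1) q
      = 2 * ((b q).2 * (W q).1 - (b q).1 * (W q).2) := by
    filter_upwards [hmem] with q hq
    have h := hVekua q hq
    rw [Prod.ext_iff] at h
    obtain ⟨-, h2⟩ := h
    simp only [dzbar, hmul, hconj] at h2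
    linarith
  constructor
  · exact wave_core hu hv hb1 hb2 hud hvd heq1 heq2 (hbz_real p hp)
  · have heq1' : ∀ᶠ q in nhds p, pdx (fun r => (W r).2) q - pdt (fun r => (W r).1) q
        = 2 * ((-(b q).1) * (W q).2 - (-(b q).2) * (W q).1) := by
      filter_upwards [heq2] with q h; linarith
    have heq2' : ∀ᶠ q in nhds p, pdx (fun r => (W r).1) q - pdt (fun r => (W r).2) q
        = 2 * ((-(b q).2) * (W q).2 - (-(b q).1) * (W q).1) := by
      filter_upwards [heq1] with q h; linarith
    have hbz' : pdx (fun q => -(b q).2) p + pdt (fun q => -(b q).1) p = 0 := by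
      rw [pdx_neg, pdt_neg]
      have := hbz_real p hp
      linarith
    have := wave_core (b1 := fun q => -(b q).1) (b2 := fun q => -(b q).2) hv hu hb1.neg hb2.neg hvd hud heq1' heq2' hbz'
    rw [pdx_neg, pdt_neg] at this
    linear_combination this
end
end

section
/- Let Ω = (a,b) × (c,d) ⊆ ℝ² be an open rectangle containing (x₀,t₀), ν : Ω → ℝ, and let f : Ω → ℝ be a positive twice continuously differentiable solution of f_xx − f_tt = νf on Ω. Let u : Ω → ℝ be a twice continuously differentiable solution of u_xx − u_tt = νu on Ω. Write j·f²·∂_z̄(u/f) = Φ₁ + jΦ₂ (explicitly Φ₁ = −(f²/2)∂_t(u/f), Φ₂ = (f²/2)∂_x(u/f) up to sign conventions: j·f²·½(∂_x(u/f) − j∂_t(u/f)) = (f²/2)(−∂_t(u/f) + j∂_x(u/f))), and for a real constant c define v(x,t) = −(1/f(x,t))·[2(∫_{x₀}^{x} Φ₁(η,t) dη − ∫_{t₀}^{t} Φ₂(x₀,ξ) dξ) + c]. Then W = u + jv satisfies the main Vekua equation W_z̄ = (f_z̄/f)·W̄ on Ω, and v satisfies v_xx − v_tt = ηv on Ω with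 η = −ν + 2(f_x² − f_t²)/f²; moreover v is unique up to an additive term c/f with c a real constant. -/
noncomputable section

open Filter Topology MeasureTheory

section AuxLemmas

open Set intervalIntegral

lemma hasDerivAt_slice_x {g : Hyp → ℝ} {p : Hyp} (h : DifferentiableAt ℝ g p) :
    HasDerivAt (fun s => g (s, p.2)) (fderiv ℝ g p (1, 0)) p.1 := by
  have h1 : HasDerivAt (fun s : ℝ => ((s, p.2) : Hyp)) ((1 : ℝ), (0 : ℝ)) p.1 :=
    (hasDerivAt_id p.1).prodMk (hasDerivAt_const p.1 p.2)
  exact h.hasFDerivAt.comp_hasDerivAt p.1 h1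

lemma hasDerivAt_slice_t {g : Hyp → ℝ} {p : Hyp} (h : DifferentiableAt ℝ g p) :
    HasDerivAt (fun s => g (p.1, s)) (fderiv ℝ g p (0, 1)) p.2 := by
  have h1 : HasDerivAt (fun s : ℝ => ((p.1, s) : Hyp)) ((0 : ℝ), (1 : ℝ)) p.2 :=
    (hasDerivAt_const p.2 p.1).prodMk (hasDerivAt_id p.2)
  exact h.hasFDerivAt.comp_hasDerivAt p.2 h1

lemma pdx_eq_fderiv {g : Hyp → ℝ} {p : Hyp} (h : DifferentiableAt ℝ g p) :
    pdx g p = fderiv ℝ g p (1, 0) := (hasDerivAt_slice_x h).deriv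

lemma pdt_eq_fderiv {g : Hyp → ℝ} {p : Hyp} (h : DifferentiableAt ℝ g p) :
    pdt g p = fderiv ℝ g p (0, 1) := (hasDerivAt_slice_t h).deriv

lemma diffAt_of_contDiffOn {Ω : Set Hyp} (hΩ : IsOpen Ω) {g : Hyp → ℝ} {n : WithTop ℕ∞}
    (hg : ContDiffOn ℝ n g Ω) (hn : 1 ≤ n) {q : Hyp} (hq : q ∈ Ω) :
    DifferentiableAt ℝ g q :=
  ((hg.differentiableOn (zero_lt_one.trans_le hn).ne') q hq).differentiableAt (hΩ.mem_nhds hq)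

lemma slice_x_eventuallyEq {Ω : Set Hyp} (hΩ : IsOpen Ω) {g₁ g₂ : Hyp → ℝ}
    (h : ∀ q ∈ Ω, g₁ q = g₂ q) {p : Hyp} (hp : p ∈ Ω) :
    (fun s => g₁ (s, p.2)) =ᶠ[nhds p.1] fun s => g₂ (s, p.2) := by
  have ho : IsOpen {s : ℝ | ((s, p.2) : Hyp) ∈ Ω} :=
    hΩ.preimage (by fun_prop)
  have hm : p.1 ∈ {s : ℝ | ((s, p.2) : Hyp) ∈ Ω} := hp
  filter_upwards [ho.mem_nhds hm] with s hs using h _ hs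

lemma slice_t_eventuallyEq {Ω : Set Hyp} (hΩ : IsOpen Ω) {g₁ g₂ : Hyp → ℝ}
    (h : ∀ q ∈ Ω, g₁ q = g₂ q) {p : Hyp} (hp : p ∈ Ω) :
    (fun s => g₁ (p.1, s)) =ᶠ[nhds p.2] fun s => g₂ (p.1, s) := by
  have ho : IsOpen {s : ℝ | ((p.1, s) : Hyp) ∈ Ω} :=
    hΩ.preimage (by fun_prop)
  have hm : p.2 ∈ {s : ℝ | ((p.1, s) : Hyp) ∈ Ω} := hp
  filter_upwards [ho.mem_nhds hm] with s hs using h _ hs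

lemma pdx_congrOn {Ω : Set Hyp} (hΩ : IsOpen Ω) {g₁ g₂ : Hyp → ℝ}
    (h : ∀ q ∈ Ω, g₁ q = g₂ q) {p : Hyp} (hp : p ∈ Ω) : pdx g₁ p = pdx g₂ p :=
  (slice_x_eventuallyEq hΩ h hp).deriv_eq

lemma pdt_congrOn {Ω : Set Hyp} (hΩ : IsOpen Ω) {g₁ g₂ : Hyp → ℝ}
    (h : ∀ q ∈ Ω, g₁ q = g₂ q) {p : Hyp} (hp : p ∈ Ω) : pdt g₁ p = pdt g₂ p :=
  (slice_t_eventuallyEq hΩ h hp).deriv_eq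

lemma contDiffOn_fderiv_apply {Ω : Set Hyp} (hΩ : IsOpen Ω) {g : Hyp → ℝ}
    (hg : ContDiffOn ℝ 2 g Ω) (w : Hyp) :
    ContDiffOn ℝ 1 (fun q => fderiv ℝ g q w) Ω :=
  (ContinuousLinearMap.apply ℝ ℝ w).contDiff.comp_contDiffOn
    (hg.fderiv_of_isOpen hΩ (by norm_num))

lemma diffAt_fderiv {Ω : Set Hyp} (hΩ : IsOpen Ω) {g : Hyp → ℝ}
    (hg : ContDiffOn ℝ 2 g Ω) {q : Hyp} (hq : q ∈ Ω) :
    DifferentiableAt ℝ (fderiv ℝ g) q :=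
  (((hg.fderiv_of_isOpen hΩ (by norm_num)).differentiableOn one_ne_zero) q hq).differentiableAt
    (hΩ.mem_nhds hq)

lemma hasDerivAt_slice_x_D {Ω : Set Hyp} (hΩ : IsOpen Ω) {g : Hyp → ℝ}
    (hg : ContDiffOn ℝ 2 g Ω) {q : Hyp} (hq : q ∈ Ω) (w : Hyp) :
    HasDerivAt (fun s => fderiv ℝ g (s, q.2) w) (fderiv ℝ (fderiv ℝ g) q (1, 0) w) q.1 := by
  have hd : HasFDerivAt (fun r => fderiv ℝ g r w)
      ((ContinuousLinearMap.apply ℝ ℝ w).comp (fderiv ℝ (fderiv ℝ g) q)) q :=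
    (ContinuousLinearMap.apply ℝ ℝ w).hasFDerivAt.comp q (diffAt_fderiv hΩ hg hq).hasFDerivAt
  have h1 : HasDerivAt (fun s : ℝ => ((s, q.2) : Hyp)) ((1 : ℝ), (0 : ℝ)) q.1 :=
    (hasDerivAt_id q.1).prodMk (hasDerivAt_const q.1 q.2)
  exact hd.comp_hasDerivAt q.1 h1

lemma hasDerivAt_slice_t_D {Ω : Set Hyp} (hΩ : IsOpen Ω) {g : Hyp → ℝ}
    (hg : ContDiffOn ℝ 2 g Ω) {q : Hyp} (hq : q ∈ Ω) (w : Hyp) :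
    HasDerivAt (fun s => fderiv ℝ g (q.1, s) w) (fderiv ℝ (fderiv ℝ g) q (0, 1) w) q.2 := by
  have hd : HasFDerivAt (fun r => fderiv ℝ g r w)
      ((ContinuousLinearMap.apply ℝ ℝ w).comp (fderiv ℝ (fderiv ℝ g) q)) q :=
    (ContinuousLinearMap.apply ℝ ℝ w).hasFDerivAt.comp q (diffAt_fderiv hΩ hg hq).hasFDerivAt
  have h1 : HasDerivAt (fun s : ℝ => ((q.1, s) : Hyp)) ((0 : ℝ), (1 : ℝ)) q.2 :=
    (hasDerivAt_const q.2 q.1).prodMk (hasDerivAt_id q.2)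
  exact hd.comp_hasDerivAt q.2 h1

lemma fderiv2_symm {Ω : Set Hyp} (hΩ : IsOpen Ω) {g : Hyp → ℝ}
    (hg : ContDiffOn ℝ 2 g Ω) {q : Hyp} (hq : q ∈ Ω) (w₁ w₂ : Hyp) :
    fderiv ℝ (fderiv ℝ g) q w₁ w₂ = fderiv ℝ (fderiv ℝ g) q w₂ w₁ := by
  apply second_derivative_symmetric_of_eventually (f := g) (f' := fderiv ℝ g)
  · filter_upwards [hΩ.mem_nhds hq] with r hr using
      (diffAt_of_contDiffOn hΩ hg (by norm_num) hr).hasFDerivAt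
  · exact (diffAt_fderiv hΩ hg hq).hasFDerivAt

lemma eq_on_of_hasDerivAt_zero {S : Set ℝ} (hS : Convex ℝ S) {h : ℝ → ℝ}
    (hd : ∀ s ∈ S, HasDerivAt h 0 s) {α β : ℝ} (hα : α ∈ S) (hβ : β ∈ S) :
    h α = h β := by
  have := hS.norm_image_sub_le_of_norm_hasDerivWithin_le (C := 0)
    (fun s hs => (hd s hs).hasDerivWithinAt) (fun s _ => by simp) hα hβ
  rw [zero_mul] at this
  exact (norm_sub_eq_zero_iff.mp (le_antisymm this (norm_nonneg _))).symm

end AuxLemmas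
section Aux2
open Set intervalIntegral

/-- `Φ₁` as a Wronskian-type expression. -/
def w1F (u f : Hyp → ℝ) (q : Hyp) : ℝ :=
  (u q * fderiv ℝ f q (0, 1) - fderiv ℝ u q (0, 1) * f q) / 2

/-- `Φ₂` as a Wronskian-type expression. -/
def w2F (u f : Hyp → ℝ) (q : Hyp) : ℝ :=
  (fderiv ℝ u q (1, 0) * f q - u q * fderiv ℝ f q (1, 0)) / 2

/-- `∂ₜ Φ₁`. -/
def wAF (u f : Hyp → ℝ) (q : Hyp) : ℝ :=
  (u q * fderiv ℝ (fderiv ℝ f) q (0, 1) (0, 1)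
    - fderiv ℝ (fderiv ℝ u) q (0, 1) (0, 1) * f q) / 2

lemma continuousOn_fderiv_apply {Ω : Set Hyp} (hΩ : IsOpen Ω) {g : Hyp → ℝ}
    (hg : ContDiffOn ℝ 2 g Ω) (w : Hyp) :
    ContinuousOn (fun q => fderiv ℝ g q w) Ω :=
  (contDiffOn_fderiv_apply hΩ hg w).continuousOn

lemma continuousOn_fderiv2_apply {Ω : Set Hyp} (hΩ : IsOpen Ω) {g : Hyp → ℝ}
    (hg : ContDiffOn ℝ 2 g Ω) (w₁ w₂ : Hyp) :
    ContinuousOn (fun q => fderiv ℝ (fderiv ℝ g) q w₁ w₂) Ω := by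
  have h1 : ContinuousOn (fderiv ℝ (fderiv ℝ g)) Ω :=
    (hg.fderiv_of_isOpen hΩ (by norm_num)).continuousOn_fderiv_of_isOpen hΩ le_rfl
  exact (h1.clm_apply continuousOn_const).clm_apply continuousOn_const

lemma continuousOn_w1F {Ω : Set Hyp} (hΩ : IsOpen Ω) {u f : Hyp → ℝ}
    (hu : ContDiffOn ℝ 2 u Ω) (hf : ContDiffOn ℝ 2 f Ω) :
    ContinuousOn (w1F u f) Ω := by
  unfold w1F
  exact (((hu.continuousOn).mul (continuousOn_fderiv_apply hΩ hf _)).sub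
    ((continuousOn_fderiv_apply hΩ hu _).mul hf.continuousOn)).div_const _

lemma continuousOn_w2F {Ω : Set Hyp} (hΩ : IsOpen Ω) {u f : Hyp → ℝ}
    (hu : ContDiffOn ℝ 2 u Ω) (hf : ContDiffOn ℝ 2 f Ω) :
    ContinuousOn (w2F u f) Ω := by
  unfold w2F
  exact (((continuousOn_fderiv_apply hΩ hu _).mul hf.continuousOn).sub
    ((hu.continuousOn).mul (continuousOn_fderiv_apply hΩ hf _))).div_const _

lemma continuousOn_wAF {Ω : Set Hyp} (hΩ : IsOpen Ω) {u f : Hyp → ℝ}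
    (hu : ContDiffOn ℝ 2 u Ω) (hf : ContDiffOn ℝ 2 f Ω) :
    ContinuousOn (wAF u f) Ω := by
  unfold wAF
  exact (((hu.continuousOn).mul (continuousOn_fderiv2_apply hΩ hf _ _)).sub
    ((continuousOn_fderiv2_apply hΩ hu _ _).mul hf.continuousOn)).div_const _

/-- Translation of the wave operator into second `fderiv`s. -/
lemma wave_translate {Ω : Set Hyp} (hΩ : IsOpen Ω) {g : Hyp → ℝ}
    (hg : ContDiffOn ℝ 2 g Ω) {q : Hyp} (hq : q ∈ Ω) :
    waveOp g q = fderiv ℝ (fderiv ℝ g) q (1, 0) (1, 0)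
      - fderiv ℝ (fderiv ℝ g) q (0, 1) (0, 1) := by
  have e1 : ∀ r ∈ Ω, pdx g r = fderiv ℝ g r (1, 0) := fun r hr =>
    pdx_eq_fderiv (diffAt_of_contDiffOn hΩ hg (by norm_num) hr)
  have e2 : ∀ r ∈ Ω, pdt g r = fderiv ℝ g r (0, 1) := fun r hr =>
    pdt_eq_fderiv (diffAt_of_contDiffOn hΩ hg (by norm_num) hr)
  have h1 : pdx (pdx g) q = fderiv ℝ (fderiv ℝ g) q (1, 0) (1, 0) := by
    rw [pdx_congrOn hΩ e1 hq]
    exact (hasDerivAt_slice_x_D hΩ hg hq _).deriv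
  have h2 : pdt (pdt g) q = fderiv ℝ (fderiv ℝ g) q (0, 1) (0, 1) := by
    rw [pdt_congrOn hΩ e2 hq]
    exact (hasDerivAt_slice_t_D hΩ hg hq _).deriv
  rw [waveOp, h1, h2]

/-- slice-t derivative of `w1F`. -/
lemma hasDerivAt_w1F_t {Ω : Set Hyp} (hΩ : IsOpen Ω) {u f : Hyp → ℝ}
    (hu : ContDiffOn ℝ 2 u Ω) (hf : ContDiffOn ℝ 2 f Ω) {q : Hyp} (hq : q ∈ Ω) :
    HasDerivAt (fun s => w1F u f (q.1, s)) (wAF u f q) q.2 := by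
  have hus : HasDerivAt (fun s => u (q.1, s)) (fderiv ℝ u q (0, 1)) q.2 :=
    hasDerivAt_slice_t (diffAt_of_contDiffOn hΩ hu (by norm_num) hq)
  have hfs : HasDerivAt (fun s => f (q.1, s)) (fderiv ℝ f q (0, 1)) q.2 :=
    hasDerivAt_slice_t (diffAt_of_contDiffOn hΩ hf (by norm_num) hq)
  have hft : HasDerivAt (fun s => fderiv ℝ f (q.1, s) (0, 1))
      (fderiv ℝ (fderiv ℝ f) q (0, 1) (0, 1)) q.2 := hasDerivAt_slice_t_D hΩ hf hq _
  have hut : HasDerivAt (fun s => fderiv ℝ u (q.1, s) (0, 1))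
      (fderiv ℝ (fderiv ℝ u) q (0, 1) (0, 1)) q.2 := hasDerivAt_slice_t_D hΩ hu hq _
  have := (((hus.mul hft).sub (hut.mul hfs)).div_const 2)
  convert this using 1
  · rfl
  · rfl
  · rfl
  unfold wAF; ring

/-- slice-x derivative of `w2F` equals `-∂ₜ w1F` (the curl identity), given both
wave equations. -/
lemma hasDerivAt_w2F_x {Ω : Set Hyp} (hΩ : IsOpen Ω) {u f ν : Hyp → ℝ}
    (hu : ContDiffOn ℝ 2 u Ω) (hf : ContDiffOn ℝ 2 f Ω)
    (huKG : ∀ p ∈ Ω, waveOp u p = ν p * u p)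
    (hKG : ∀ p ∈ Ω, waveOp f p = ν p * f p) {q : Hyp} (hq : q ∈ Ω) :
    HasDerivAt (fun s => w2F u f (s, q.2)) (-(wAF u f q)) q.1 := by
  have hus : HasDerivAt (fun s => u (s, q.2)) (fderiv ℝ u q (1, 0)) q.1 :=
    hasDerivAt_slice_x (diffAt_of_contDiffOn hΩ hu (by norm_num) hq)
  have hfs : HasDerivAt (fun s => f (s, q.2)) (fderiv ℝ f q (1, 0)) q.1 :=
    hasDerivAt_slice_x (diffAt_of_contDiffOn hΩ hf (by norm_num) hq)
  have hfx : HasDerivAt (fun s => fderiv ℝ f (s, q.2) (1, 0))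
      (fderiv ℝ (fderiv ℝ f) q (1, 0) (1, 0)) q.1 := hasDerivAt_slice_x_D hΩ hf hq _
  have hux : HasDerivAt (fun s => fderiv ℝ u (s, q.2) (1, 0))
      (fderiv ℝ (fderiv ℝ u) q (1, 0) (1, 0)) q.1 := hasDerivAt_slice_x_D hΩ hu hq _
  have hwu : fderiv ℝ (fderiv ℝ u) q (1, 0) (1, 0)
      - fderiv ℝ (fderiv ℝ u) q (0, 1) (0, 1) = ν q * u q := by
    rw [← wave_translate hΩ hu hq]; exact huKG q hq
  have hwf : fderiv ℝ (fderiv ℝ f) q (1, 0) (1, 0)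
      - fderiv ℝ (fderiv ℝ f) q (0, 1) (0, 1) = ν q * f q := by
    rw [← wave_translate hΩ hf hq]; exact hKG q hq
  have := (((hux.mul hfs).sub (hus.mul hfx)).div_const 2)
  convert this using 1
  · rfl
  · rfl
  · rfl
  unfold wAF
  linear_combination (u q / 2) * hwf - (f q / 2) * hwu

/-- On `Ω`, `Φ₁ = w1F u f`. -/
lemma Phi1_eq {Ω : Set Hyp} (hΩ : IsOpen Ω) {u f Φ₁ : Hyp → ℝ}
    (hu : ContDiffOn ℝ 2 u Ω) (hf : ContDiffOn ℝ 2 f Ω) (hfpos : ∀ p ∈ Ω, 0 < f p)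
    (hΦ₁ : ∀ p, Φ₁ p = -(f p ^ 2 / 2) * pdt (fun q => u q / f q) p)
    {q : Hyp} (hq : q ∈ Ω) : Φ₁ q = w1F u f q := by
  have hus : HasDerivAt (fun s => u (q.1, s)) (fderiv ℝ u q (0, 1)) q.2 :=
    hasDerivAt_slice_t (diffAt_of_contDiffOn hΩ hu (by norm_num) hq)
  have hfs : HasDerivAt (fun s => f (q.1, s)) (fderiv ℝ f q (0, 1)) q.2 :=
    hasDerivAt_slice_t (diffAt_of_contDiffOn hΩ hf (by norm_num) hq)
  have hne : f q ≠ 0 := (hfpos q hq).ne'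
  have hdiv := hus.div hfs hne
  have hp : pdt (fun r => u r / f r) q
      = (fderiv ℝ u q (0, 1) * f q - u q * fderiv ℝ f q (0, 1)) / f q ^ 2 := hdiv.deriv
  rw [hΦ₁ q, hp]
  unfold w1F
  field_simp
  ring

/-- On `Ω`, `Φ₂ = w2F u f`. -/
lemma Phi2_eq {Ω : Set Hyp} (hΩ : IsOpen Ω) {u f Φ₂ : Hyp → ℝ}
    (hu : ContDiffOn ℝ 2 u Ω) (hf : ContDiffOn ℝ 2 f Ω) (hfpos : ∀ p ∈ Ω, 0 < f p)
    (hΦ₂ : ∀ p, Φ₂ p = (f p ^ 2 / 2) * pdx (fun q => u q / f q) p)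
    {q : Hyp} (hq : q ∈ Ω) : Φ₂ q = w2F u f q := by
  have hus : HasDerivAt (fun s => u (s, q.2)) (fderiv ℝ u q (1, 0)) q.1 :=
    hasDerivAt_slice_x (diffAt_of_contDiffOn hΩ hu (by norm_num) hq)
  have hfs : HasDerivAt (fun s => f (s, q.2)) (fderiv ℝ f q (1, 0)) q.1 :=
    hasDerivAt_slice_x (diffAt_of_contDiffOn hΩ hf (by norm_num) hq)
  have hne : f q ≠ 0 := (hfpos q hq).ne'
  have hdiv := hus.div hfs hne
  have hp : pdx (fun r => u r / f r) q
      = (fderiv ℝ u q (1, 0) * f q - u q * fderiv ℝ f q (1, 0)) / f q ^ 2 := hdiv.deriv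
  rw [hΦ₂ q, hp]
  unfold w2F
  field_simp

end Aux2
section Aux3
open Set intervalIntegral

lemma v_slice_x (a b c d x₀ t₀ : ℝ) (Ω : Set Hyp)
    (hΩ : Ω = Set.Ioo a b ×ˢ Set.Ioo c d) (hz₀ : ((x₀, t₀) : Hyp) ∈ Ω)
    (f : Hyp → ℝ) (hf : ContDiffOn ℝ 2 f Ω) (hfpos : ∀ p ∈ Ω, 0 < f p)
    (u : Hyp → ℝ) (hu : ContDiffOn ℝ 2 u Ω)
    (Φ₁ Φ₂ : Hyp → ℝ) (hΦ₁ : ∀ q ∈ Ω, Φ₁ q = w1F u f q)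
    (c₀ : ℝ) (v : Hyp → ℝ)
    (hv : ∀ p : Hyp, v p = -(1 / f p) *
      (2 * ((∫ η in x₀..p.1, Φ₁ (η, p.2)) - ∫ ξ in t₀..p.2, Φ₂ (x₀, ξ)) + c₀))
    {p : Hyp} (hp : p ∈ Ω) :
    HasDerivAt (fun s => v (s, p.2))
      (fderiv ℝ u p (0, 1)
        - (u p * fderiv ℝ f p (0, 1) + v p * fderiv ℝ f p (1, 0)) / f p) p.1 := by
  have hΩo : IsOpen Ω := by rw [hΩ]; exact isOpen_Ioo.prod isOpen_Ioo
  have hp' : p.1 ∈ Set.Ioo a b ∧ p.2 ∈ Set.Ioo c d := by rw [hΩ] at hp; exact hp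
  have hx0 : x₀ ∈ Set.Ioo a b := by rw [hΩ] at hz₀; exact hz₀.1
  have hmem : ∀ s ∈ Set.Ioo a b, ((s, p.2) : Hyp) ∈ Ω := by
    intro s hs; rw [hΩ]; exact ⟨hs, hp'.2⟩
  have hΦc : ContinuousOn Φ₁ Ω :=
    (continuousOn_w1F hΩo hu hf).congr (fun q hq => hΦ₁ q hq)
  have hslice : ∀ s ∈ Set.Ioo a b, ContinuousAt (fun η => Φ₁ (η, p.2)) s := by
    intro s hs
    have hc2 : Continuous fun η : ℝ => ((η, p.2) : Hyp) := by fun_prop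
    exact ContinuousAt.comp (hΦc.continuousAt (hΩo.mem_nhds (hmem s hs))) hc2.continuousAt
  have hsub : Set.uIcc x₀ p.1 ⊆ Set.Ioo a b :=
    Set.ordConnected_Ioo.uIcc_subset hx0 hp'.1
  have hco : ContinuousOn (fun η => Φ₁ (η, p.2)) (Set.uIcc x₀ p.1) :=
    fun s hs => (hslice s (hsub hs)).continuousWithinAt
  have hint : IntervalIntegrable (fun η => Φ₁ (η, p.2)) MeasureTheory.volume x₀ p.1 :=
    hco.intervalIntegrable
  have hmeas : StronglyMeasurableAtFilter (fun η => Φ₁ (η, p.2)) (nhds p.1) :=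
    ContinuousAt.stronglyMeasurableAtFilter isOpen_Ioo hslice p.1 hp'.1
  have hI : HasDerivAt (fun s => ∫ η in x₀..s, Φ₁ (η, p.2)) (Φ₁ (p.1, p.2)) p.1 :=
    intervalIntegral.integral_hasDerivAt_right hint hmeas (hslice p.1 hp'.1)
  have hfs : HasDerivAt (fun s => f (s, p.2)) (fderiv ℝ f p (1, 0)) p.1 :=
    hasDerivAt_slice_x (diffAt_of_contDiffOn hΩo hf (by norm_num) hp)
  have hne : f p ≠ 0 := (hfpos p hp).ne'
  have h2 := ((hI.sub_const (∫ ξ in t₀..p.2, Φ₂ (x₀, ξ))).const_mul 2).add_const c₀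
  have h3 := ((hasDerivAt_const p.1 (1 : ℝ)).div hfs (by exact hne)).neg
  have h4 := h3.mul h2
  have hfun : (fun s => v (s, p.2)) = (fun s => -(1 / f (s, p.2)) *
      (2 * ((∫ η in x₀..s, Φ₁ (η, p.2)) - ∫ ξ in t₀..p.2, Φ₂ (x₀, ξ)) + c₀)) :=
    funext fun s => hv _
  rw [hfun]
  convert h4 using 1
  · rfl
  · rfl
  · rfl
  simp only [Pi.neg_apply, Pi.div_apply, Pi.sub_apply, Pi.mul_apply, Pi.add_apply]
  have hVp : 2 * ((∫ η in x₀..p.1, Φ₁ (η, p.2)) - ∫ ξ in t₀..p.2, Φ₂ (x₀, ξ)) + c₀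
      = -(f p * v p) := by
    rw [hv p]; field_simp
  rw [hVp, hΦ₁ (p.1, p.2) (by rw [Prod.mk.eta]; exact hp)]
  simp only [Prod.mk.eta]
  unfold w1F
  field_simp
  ring
end Aux3
section Aux4
open Set intervalIntegral MeasureTheory

lemma v_slice_t (a b c d x₀ t₀ : ℝ) (Ω : Set Hyp)
    (hΩ : Ω = Set.Ioo a b ×ˢ Set.Ioo c d) (hz₀ : ((x₀, t₀) : Hyp) ∈ Ω)
    (ν f : Hyp → ℝ) (hf : ContDiffOn ℝ 2 f Ω) (hfpos : ∀ p ∈ Ω, 0 < f p)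
    (hKG : ∀ p ∈ Ω, waveOp f p = ν p * f p)
    (u : Hyp → ℝ) (hu : ContDiffOn ℝ 2 u Ω)
    (huKG : ∀ p ∈ Ω, waveOp u p = ν p * u p)
    (Φ₁ Φ₂ : Hyp → ℝ) (hΦ₁ : ∀ q ∈ Ω, Φ₁ q = w1F u f q) (hΦ₂ : ∀ q ∈ Ω, Φ₂ q = w2F u f q)
    (c₀ : ℝ) (v : Hyp → ℝ)
    (hv : ∀ p : Hyp, v p = -(1 / f p) *
      (2 * ((∫ η in x₀..p.1, Φ₁ (η, p.2)) - ∫ ξ in t₀..p.2, Φ₂ (x₀, ξ)) + c₀))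
    {p : Hyp} (hp : p ∈ Ω) :
    HasDerivAt (fun s => v (p.1, s))
      (fderiv ℝ u p (1, 0)
        - (u p * fderiv ℝ f p (1, 0) + v p * fderiv ℝ f p (0, 1)) / f p) p.2 := by
  have hΩo : IsOpen Ω := by rw [hΩ]; exact isOpen_Ioo.prod isOpen_Ioo
  have hp' : p.1 ∈ Set.Ioo a b ∧ p.2 ∈ Set.Ioo c d := by rw [hΩ] at hp; exact hp
  have hx0 : x₀ ∈ Set.Ioo a b := by rw [hΩ] at hz₀; exact hz₀.1
  have ht0 : t₀ ∈ Set.Ioo c d := by rw [hΩ] at hz₀; exact hz₀.2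
  have hmemΩ : ∀ s ∈ Set.Ioo a b, ∀ τ ∈ Set.Ioo c d, ((s, τ) : Hyp) ∈ Ω := by
    intro s hs τ hτ; rw [hΩ]; exact ⟨hs, hτ⟩
  have hΦ₁c : ContinuousOn Φ₁ Ω :=
    (continuousOn_w1F hΩo hu hf).congr (fun q hq => hΦ₁ q hq)
  have hΦ₂c : ContinuousOn Φ₂ Ω :=
    (continuousOn_w2F hΩo hu hf).congr (fun q hq => hΦ₂ q hq)
  have hwAc : ContinuousOn (wAF u f) Ω := continuousOn_wAF hΩo hu hf
  have hsubx : Set.uIcc x₀ p.1 ⊆ Set.Ioo a b :=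
    Set.ordConnected_Ioo.uIcc_subset hx0 hp'.1
  -- choice of ε
  set ε : ℝ := min (p.2 - c) (d - p.2) / 2 with hεdef
  have hmin1 : min (p.2 - c) (d - p.2) ≤ p.2 - c := min_le_left _ _
  have hmin2 : min (p.2 - c) (d - p.2) ≤ d - p.2 := min_le_right _ _
  have hε : 0 < ε := by
    have h1 := hp'.2.1; have h2 := hp'.2.2
    have : 0 < min (p.2 - c) (d - p.2) := lt_min (by linarith) (by linarith)
    positivity
  have hball : ∀ τ ∈ Metric.ball p.2 ε, τ ∈ Set.Ioo c d := by
    intro τ hτ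
    rw [Real.ball_eq_Ioo] at hτ
    exact ⟨by linarith [hτ.1], by linarith [hτ.2]⟩
  have hIcc : ∀ τ ∈ Set.Icc (p.2 - ε) (p.2 + ε), τ ∈ Set.Ioo c d := by
    intro τ hτ
    exact ⟨by linarith [hτ.1], by linarith [hτ.2]⟩
  -- continuity of the x-slices
  have hsliceCA : ∀ τ ∈ Set.Ioo c d, ∀ s ∈ Set.Ioo a b,
      ContinuousAt (fun η => Φ₁ (η, τ)) s := by
    intro τ hτ s hs
    have hc2 : Continuous fun η : ℝ => ((η, τ) : Hyp) := by fun_prop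
    exact ContinuousAt.comp (hΦ₁c.continuousAt (hΩo.mem_nhds (hmemΩ s hs τ hτ))) hc2.continuousAt
  have hsliceA : ∀ s ∈ Set.Ioo a b, ContinuousAt (fun η => wAF u f (η, p.2)) s := by
    intro s hs
    have hc2 : Continuous fun η : ℝ => ((η, p.2) : Hyp) := by fun_prop
    exact ContinuousAt.comp (g := wAF u f) (f := fun η : ℝ => ((η, p.2) : Hyp)) (x := s)
      (hwAc.continuousAt (hΩo.mem_nhds (hmemΩ s hs p.2 hp'.2))) hc2.continuousAt
  -- the compact bound
  obtain ⟨C, hC⟩ : ∃ C, ∀ q ∈ (Set.uIcc x₀ p.1 ×ˢ Set.Icc (p.2 - ε) (p.2 + ε) : Set Hyp),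
      ‖wAF u f q‖ ≤ C := by
    apply (isCompact_uIcc.prod isCompact_Icc).exists_bound_of_continuousOn
    apply hwAc.mono
    rintro ⟨s, τ⟩ ⟨hs, hτ⟩
    exact hmemΩ s (hsubx hs) τ (hIcc τ hτ)
  -- differentiation under the integral sign
  have hN : HasDerivAt (fun τ => ∫ η in x₀..p.1, Φ₁ (η, τ))
      (∫ η in x₀..p.1, wAF u f (η, p.2)) p.2 := by
    have hF_meas : ∀ᶠ τ in nhds p.2, AEStronglyMeasurable (fun η => Φ₁ (η, τ))
        (volume.restrict (Set.uIoc x₀ p.1)) := by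
      filter_upwards [isOpen_Ioo.mem_nhds hp'.2] with τ hτ
      have : ContinuousOn (fun η => Φ₁ (η, τ)) (Set.uIoc x₀ p.1) := fun s hs =>
        ((hsliceCA τ hτ s (hsubx (Set.uIoc_subset_uIcc hs)))).continuousWithinAt
      exact this.aestronglyMeasurable measurableSet_uIoc
    have hF_int : IntervalIntegrable (fun η => Φ₁ (η, p.2)) volume x₀ p.1 := by
      have hco : ContinuousOn (fun η => Φ₁ (η, p.2)) (Set.uIcc x₀ p.1) :=
        fun s hs => (hsliceCA p.2 hp'.2 s (hsubx hs)).continuousWithinAt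
      exact hco.intervalIntegrable
    have hF'_meas : AEStronglyMeasurable (fun η => wAF u f (η, p.2))
        (volume.restrict (Set.uIoc x₀ p.1)) := by
      have : ContinuousOn (fun η => wAF u f (η, p.2)) (Set.uIoc x₀ p.1) := fun s hs =>
        (hsliceA s (hsubx (Set.uIoc_subset_uIcc hs))).continuousWithinAt
      exact this.aestronglyMeasurable measurableSet_uIoc
    have h_bound : ∀ᵐ η ∂volume, η ∈ Set.uIoc x₀ p.1 →
        ∀ τ ∈ Metric.ball p.2 ε, ‖wAF u f (η, τ)‖ ≤ C := by
      refine Filter.Eventually.of_forall (fun η hη τ hτ => hC _ ?_)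
      refine ⟨Set.uIoc_subset_uIcc hη, ?_⟩
      rw [Real.ball_eq_Ioo] at hτ
      exact ⟨le_of_lt hτ.1, le_of_lt hτ.2⟩
    have h_diff : ∀ᵐ η ∂volume, η ∈ Set.uIoc x₀ p.1 →
        ∀ τ ∈ Metric.ball p.2 ε, HasDerivAt (fun τ' => Φ₁ (η, τ')) (wAF u f (η, τ)) τ := by
      refine Filter.Eventually.of_forall (fun η hη τ hτ => ?_)
      have hqΩ : ((η, τ) : Hyp) ∈ Ω :=
        hmemΩ η (hsubx (Set.uIoc_subset_uIcc hη)) τ (hball τ hτ)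
      have h1 : HasDerivAt (fun s => w1F u f (η, s)) (wAF u f (η, τ)) τ :=
        hasDerivAt_w1F_t hΩo hu hf hqΩ
      exact h1.congr_of_eventuallyEq (slice_t_eventuallyEq hΩo hΦ₁ hqΩ)
    exact (intervalIntegral.hasDerivAt_integral_of_dominated_loc_of_deriv_le (𝕜 := ℝ)
      (μ := volume) (F := fun τ η => Φ₁ (η, τ)) (F' := fun τ η => wAF u f (η, τ))
      (bound := fun _ => C) (a := x₀) (b := p.1) (x₀ := p.2) (Metric.ball_mem_nhds _ hε) hF_meas
      hF_int hF'_meas h_bound intervalIntegrable_const h_diff).2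
  -- evaluating the inner integral via FTC
  have hInner : (∫ η in x₀..p.1, wAF u f (η, p.2))
      = -Φ₂ (p.1, p.2) - -Φ₂ (x₀, p.2) := by
    apply intervalIntegral.integral_eq_sub_of_hasDerivAt
      (f := fun s => -Φ₂ (s, p.2)) (f' := fun η => wAF u f (η, p.2))
    · intro s hs
      have hqΩ : ((s, p.2) : Hyp) ∈ Ω := hmemΩ s (hsubx hs) p.2 hp'.2
      have h1 : HasDerivAt (fun s' => w2F u f (s', p.2)) (-(wAF u f (s, p.2))) s :=
        hasDerivAt_w2F_x hΩo hu hf huKG hKG hqΩ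
      have h2 : HasDerivAt (fun s' => -w2F u f (s', p.2)) (wAF u f (s, p.2)) s := by
        have h1n := h1.neg
        simp only [neg_neg] at h1n
        exact h1n
      apply h2.congr_of_eventuallyEq
      have := slice_x_eventuallyEq hΩo hΦ₂ hqΩ
      filter_upwards [this] with r hr
      simp [hr]
    · have hco : ContinuousOn (fun η => wAF u f (η, p.2)) (Set.uIcc x₀ p.1) :=
        fun s hs => (hsliceA s (hsubx hs)).continuousWithinAt
      exact hco.intervalIntegrable
  rw [hInner] at hN
  -- FTC for the second integral
  have hM : HasDerivAt (fun τ => ∫ ξ in t₀..τ, Φ₂ (x₀, ξ)) (Φ₂ (x₀, p.2)) p.2 := by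
    have hsliceB : ∀ τ ∈ Set.Ioo c d, ContinuousAt (fun ξ => Φ₂ (x₀, ξ)) τ := by
      intro τ hτ
      have hc2 : Continuous fun ξ : ℝ => ((x₀, ξ) : Hyp) := by fun_prop
      exact ContinuousAt.comp (hΦ₂c.continuousAt (hΩo.mem_nhds (hmemΩ x₀ hx0 τ hτ))) hc2.continuousAt
    have hsubt : Set.uIcc t₀ p.2 ⊆ Set.Ioo c d :=
      Set.ordConnected_Ioo.uIcc_subset ht0 hp'.2
    have hco : ContinuousOn (fun ξ => Φ₂ (x₀, ξ)) (Set.uIcc t₀ p.2) :=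
      fun s hs => (hsliceB s (hsubt hs)).continuousWithinAt
    exact intervalIntegral.integral_hasDerivAt_right hco.intervalIntegrable
      (ContinuousAt.stronglyMeasurableAtFilter isOpen_Ioo hsliceB p.2 hp'.2)
      (hsliceB p.2 hp'.2)
  -- assemble
  have hfs : HasDerivAt (fun s => f (p.1, s)) (fderiv ℝ f p (0, 1)) p.2 :=
    hasDerivAt_slice_t (diffAt_of_contDiffOn hΩo hf (by norm_num) hp)
  have hne : f p ≠ 0 := (hfpos p hp).ne'
  have h2 := ((hN.sub hM).const_mul 2).add_const c₀
  have h3 := ((hasDerivAt_const p.2 (1 : ℝ)).div hfs (by exact hne)).neg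
  have h4 := h3.mul h2
  have hfun : (fun s => v (p.1, s)) = (fun s => -(1 / f (p.1, s)) *
      (2 * ((∫ η in x₀..p.1, Φ₁ (η, s)) - ∫ ξ in t₀..s, Φ₂ (x₀, ξ)) + c₀)) :=
    funext fun s => hv _
  rw [hfun]
  convert h4 using 1
  · rfl
  · rfl
  · rfl
  simp only [Pi.neg_apply, Pi.div_apply, Pi.sub_apply, Pi.mul_apply, Pi.add_apply]
  have hVp : 2 * ((∫ η in x₀..p.1, Φ₁ (η, p.2)) - ∫ ξ in t₀..p.2, Φ₂ (x₀, ξ)) + c₀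
      = -(f p * v p) := by
    rw [hv p]; field_simp
  rw [hVp, hΦ₂ (p.1, p.2) (by rw [Prod.mk.eta]; exact hp)]
  simp only [Prod.mk.eta]
  unfold w2F
  field_simp
  ring
end Aux4

/-- given a C² solution `u` of `□u = νu` on an open rectangle `Ω`, with
`Φ₁ + jΦ₂ = j·f²·∂_z̄(u/f)` and
`v = −(1/f)·[2(∫_{x₀}^{x} Φ₁(η,t) dη − ∫_{t₀}^{t} Φ₂(x₀,ξ) dξ) + c]`, the function
`W = u + jv` solves the main Vekua equation `W_z̄ = (f_z̄/f)W̄` on `Ω` and `v` solves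
`□v = ηv` with `η = −ν + 2(f_x² − f_t²)/f²`; moreover `v` is unique up to an additive
term `c'/f`. -/
theorem conjugate_metaharmonic_v (a b c d x₀ t₀ : ℝ) (Ω : Set Hyp)
    (hΩ : Ω = Set.Ioo a b ×ˢ Set.Ioo c d) (hz₀ : ((x₀, t₀) : Hyp) ∈ Ω)
    (ν f : Hyp → ℝ) (hf : ContDiffOn ℝ 2 f Ω) (hfpos : ∀ p ∈ Ω, 0 < f p)
    (hKG : ∀ p ∈ Ω, waveOp f p = ν p * f p)
    (u : Hyp → ℝ) (hu : ContDiffOn ℝ 2 u Ω)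
    (huKG : ∀ p ∈ Ω, waveOp u p = ν p * u p)
    (Φ₁ Φ₂ : Hyp → ℝ)
    (hΦ₁ : ∀ p, Φ₁ p = -(f p ^ 2 / 2) * pdt (fun q => u q / f q) p)
    (hΦ₂ : ∀ p, Φ₂ p = (f p ^ 2 / 2) * pdx (fun q => u q / f q) p)
    (c₀ : ℝ) (v : Hyp → ℝ)
    (hv : ∀ p : Hyp, v p = -(1 / f p) *
      (2 * ((∫ η in x₀..p.1, Φ₁ (η, p.2)) - ∫ ξ in t₀..p.2, Φ₂ (x₀, ξ)) + c₀)) :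
    (∀ p ∈ Ω, dzbar (fun q => ((u q, v q) : Hyp)) p =
      hmul (hdiv (rzbar f p) (f p, 0)) (hconj (u p, v p))) ∧
    (∀ p ∈ Ω, waveOp v p =
      (-ν p + 2 * ((pdx f p) ^ 2 - (pdt f p) ^ 2) / (f p) ^ 2) * v p) ∧
    (∀ v' : Hyp → ℝ, ContDiffOn ℝ 1 v' Ω →
      (∀ p ∈ Ω, dzbar (fun q => ((u q, v' q) : Hyp)) p =
        hmul (hdiv (rzbar f p) (f p, 0)) (hconj (u p, v' p))) →
      ∃ c' : ℝ, ∀ p ∈ Ω, v' p = v p + c' / f p) := by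
  have hΩo : IsOpen Ω := by rw [hΩ]; exact isOpen_Ioo.prod isOpen_Ioo
  have hne : ∀ p ∈ Ω, f p ≠ 0 := fun p hp => (hfpos p hp).ne'
  have hΦ₁' : ∀ q ∈ Ω, Φ₁ q = w1F u f q := fun q hq =>
    Phi1_eq hΩo hu hf hfpos hΦ₁ hq
  have hΦ₂' : ∀ q ∈ Ω, Φ₂ q = w2F u f q := fun q hq =>
    Phi2_eq hΩo hu hf hfpos hΦ₂ hq
  have hVx : ∀ p ∈ Ω, HasDerivAt (fun s => v (s, p.2))
      (fderiv ℝ u p (0, 1)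
        - (u p * fderiv ℝ f p (0, 1) + v p * fderiv ℝ f p (1, 0)) / f p) p.1 :=
    fun p hp => v_slice_x a b c d x₀ t₀ Ω hΩ hz₀ f hf hfpos u hu Φ₁ Φ₂ hΦ₁' c₀ v hv hp
  have hVt : ∀ p ∈ Ω, HasDerivAt (fun s => v (p.1, s))
      (fderiv ℝ u p (1, 0)
        - (u p * fderiv ℝ f p (1, 0) + v p * fderiv ℝ f p (0, 1)) / f p) p.2 :=
    fun p hp => v_slice_t a b c d x₀ t₀ Ω hΩ hz₀ ν f hf hfpos hKG u hu huKG Φ₁ Φ₂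
      hΦ₁' hΦ₂' c₀ v hv hp
  have hdu : ∀ p ∈ Ω, DifferentiableAt ℝ u p := fun p hp =>
    diffAt_of_contDiffOn hΩo hu (by norm_num) hp
  have hdf : ∀ p ∈ Ω, DifferentiableAt ℝ f p := fun p hp =>
    diffAt_of_contDiffOn hΩo hf (by norm_num) hp
  refine ⟨?_, ?_, ?_⟩
  · -- the main Vekua equation
    intro p hp
    have e1 : pdx u p = fderiv ℝ u p (1, 0) := pdx_eq_fderiv (hdu p hp)
    have e2 : pdt u p = fderiv ℝ u p (0, 1) := pdt_eq_fderiv (hdu p hp)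
    have e3 : pdx f p = fderiv ℝ f p (1, 0) := pdx_eq_fderiv (hdf p hp)
    have e4 : pdt f p = fderiv ℝ f p (0, 1) := pdt_eq_fderiv (hdf p hp)
    have e5 : pdx v p = fderiv ℝ u p (0, 1)
        - (u p * fderiv ℝ f p (0, 1) + v p * fderiv ℝ f p (1, 0)) / f p :=
      (hVx p hp).deriv
    have e6 : pdt v p = fderiv ℝ u p (1, 0)
        - (u p * fderiv ℝ f p (1, 0) + v p * fderiv ℝ f p (0, 1)) / f p :=
      (hVt p hp).deriv
    have hfne := hne p hp
    simp only [dzbar, hmul, hdiv, hinv, hconj, rzbar, Prod.mk.injEq]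
    simp only [e1, e2, e3, e4, e5, e6]
    constructor <;> (field_simp; ring)
  · -- the wave equation for v
    intro p hp
    have hfne := hne p hp
    have hxu := hasDerivAt_slice_x (hdu p hp)
    have htu := hasDerivAt_slice_t (hdu p hp)
    have hxf := hasDerivAt_slice_x (hdf p hp)
    have htf := hasDerivAt_slice_t (hdf p hp)
    have hvx2 : pdx (pdx v) p =
        fderiv ℝ (fderiv ℝ u) p (1, 0) (0, 1)
          - ((fderiv ℝ u p (1, 0) * fderiv ℝ f p (0, 1)
              + u p * fderiv ℝ (fderiv ℝ f) p (1, 0) (0, 1)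
              + ((fderiv ℝ u p (0, 1)
                  - (u p * fderiv ℝ f p (0, 1) + v p * fderiv ℝ f p (1, 0)) / f p)
                  * fderiv ℝ f p (1, 0)
                + v p * fderiv ℝ (fderiv ℝ f) p (1, 0) (1, 0))) * f p
            - (u p * fderiv ℝ f p (0, 1) + v p * fderiv ℝ f p (1, 0))
              * fderiv ℝ f p (1, 0)) / f p ^ 2 := by
      have hcongr : ∀ q ∈ Ω, pdx v q = fderiv ℝ u q (0, 1)
          - (u q * fderiv ℝ f q (0, 1) + v q * fderiv ℝ f q (1, 0)) / f q :=
        fun q hq => (hVx q hq).deriv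
      rw [pdx_congrOn hΩo hcongr hp]
      have hbig := ((hasDerivAt_slice_x_D hΩo hu hp ((0 : ℝ), (1 : ℝ))).sub
        ((((hxu.mul (hasDerivAt_slice_x_D hΩo hf hp ((0 : ℝ), (1 : ℝ)))).add
          ((hVx p hp).mul (hasDerivAt_slice_x_D hΩo hf hp ((1 : ℝ), (0 : ℝ))))).div
          hxf hfne)))
      have := hbig.deriv
      simp only [pdx]
      refine this.trans ?_
      simp only [Pi.neg_apply, Pi.div_apply, Pi.sub_apply, Pi.mul_apply, Pi.add_apply]
      all_goals simp only [Prod.mk.eta]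
      all_goals ring
    have hvt2 : pdt (pdt v) p =
        fderiv ℝ (fderiv ℝ u) p (0, 1) (1, 0)
          - ((fderiv ℝ u p (0, 1) * fderiv ℝ f p (1, 0)
              + u p * fderiv ℝ (fderiv ℝ f) p (0, 1) (1, 0)
              + ((fderiv ℝ u p (1, 0)
                  - (u p * fderiv ℝ f p (1, 0) + v p * fderiv ℝ f p (0, 1)) / f p)
                  * fderiv ℝ f p (0, 1)
                + v p * fderiv ℝ (fderiv ℝ f) p (0, 1) (0, 1))) * f p
            - (u p * fderiv ℝ f p (1, 0) + v p * fderiv ℝ f p (0, 1))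
              * fderiv ℝ f p (0, 1)) / f p ^ 2 := by
      have hcongr : ∀ q ∈ Ω, pdt v q = fderiv ℝ u q (1, 0)
          - (u q * fderiv ℝ f q (1, 0) + v q * fderiv ℝ f q (0, 1)) / f q :=
        fun q hq => (hVt q hq).deriv
      rw [pdt_congrOn hΩo hcongr hp]
      have hbig := ((hasDerivAt_slice_t_D hΩo hu hp ((1 : ℝ), (0 : ℝ))).sub
        ((((htu.mul (hasDerivAt_slice_t_D hΩo hf hp ((1 : ℝ), (0 : ℝ)))).add
          ((hVt p hp).mul (hasDerivAt_slice_t_D hΩo hf hp ((0 : ℝ), (1 : ℝ))))).div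
          htf hfne)))
      have := hbig.deriv
      simp only [pdt]
      refine this.trans ?_
      simp only [Pi.neg_apply, Pi.div_apply, Pi.sub_apply, Pi.mul_apply, Pi.add_apply]
      all_goals simp only [Prod.mk.eta]
      all_goals ring
    have hsymu : fderiv ℝ (fderiv ℝ u) p (1, 0) (0, 1)
        = fderiv ℝ (fderiv ℝ u) p (0, 1) (1, 0) := fderiv2_symm hΩo hu hp _ _
    have hsymf : fderiv ℝ (fderiv ℝ f) p (1, 0) (0, 1)
        = fderiv ℝ (fderiv ℝ f) p (0, 1) (1, 0) := fderiv2_symm hΩo hf hp _ _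
    have hwf : fderiv ℝ (fderiv ℝ f) p (1, 0) (1, 0)
        - fderiv ℝ (fderiv ℝ f) p (0, 1) (0, 1) = ν p * f p := by
      rw [← wave_translate hΩo hf hp]; exact hKG p hp
    have hF11 : fderiv ℝ (fderiv ℝ f) p (1, 0) (1, 0)
        = ν p * f p + fderiv ℝ (fderiv ℝ f) p (0, 1) (0, 1) := by linarith
    have e3 : pdx f p = fderiv ℝ f p (1, 0) := pdx_eq_fderiv (hdf p hp)
    have e4 : pdt f p = fderiv ℝ f p (0, 1) := pdt_eq_fderiv (hdf p hp)
    show pdx (pdx v) p - pdt (pdt v) p = _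
    rw [hvx2, hvt2, hsymu, hsymf, hF11, e3, e4]
    field_simp
    ring
  · -- uniqueness
    intro v' hv' hVek
    have hdv' : ∀ p ∈ Ω, DifferentiableAt ℝ v' p := fun p hp =>
      diffAt_of_contDiffOn hΩo hv' le_rfl hp
    have hcomp : ∀ p ∈ Ω, pdx v' p = fderiv ℝ u p (0, 1)
        - (u p * fderiv ℝ f p (0, 1) + v' p * fderiv ℝ f p (1, 0)) / f p := by
      intro p hp
      have hVp := hVek p hp
      have e1 : pdx u p = fderiv ℝ u p (1, 0) := pdx_eq_fderiv (hdu p hp)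
      have e2 : pdt u p = fderiv ℝ u p (0, 1) := pdt_eq_fderiv (hdu p hp)
      have e3 : pdx f p = fderiv ℝ f p (1, 0) := pdx_eq_fderiv (hdf p hp)
      have e4 : pdt f p = fderiv ℝ f p (0, 1) := pdt_eq_fderiv (hdf p hp)
      have hfne := hne p hp
      simp only [dzbar, hmul, hdiv, hinv, hconj, rzbar, Prod.mk.injEq, e1, e2, e3, e4] at hVp
      obtain ⟨h1, h2⟩ := hVp
      rw [show (fun q => v' q) = v' from rfl] at h2
      field_simp at h2
      have key' : pdx v' p * f p = fderiv ℝ u p (0, 1) * f p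
          - (u p * fderiv ℝ f p (0, 1) + v' p * fderiv ℝ f p (1, 0)) := by
        have hf4 : (4 : ℝ) * f p ^ 3 ≠ 0 :=
          mul_ne_zero (by norm_num) (pow_ne_zero _ hfne)
        apply mul_left_cancel₀ hf4
        linear_combination (4 * f p ^ 2) * h2
      have : pdx v' p = (fderiv ℝ u p (0, 1) * f p
          - (u p * fderiv ℝ f p (0, 1) + v' p * fderiv ℝ f p (1, 0))) / f p := by
        rw [eq_div_iff hfne]; exact key'
      rw [this]
      field_simp
    -- slice derivatives of f * (v' - v) vanish
    have hwx : ∀ p ∈ Ω, HasDerivAt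
        (fun s => f (s, p.2) * (v' (s, p.2) - v (s, p.2))) 0 p.1 := by
      intro p hp
      have hfne := hne p hp
      have hxf := hasDerivAt_slice_x (hdf p hp)
      have hxv' : HasDerivAt (fun s => v' (s, p.2)) (pdx v' p) p.1 := by
        have := hasDerivAt_slice_x (hdv' p hp)
        rwa [← pdx_eq_fderiv (hdv' p hp)] at this
      have := hxf.mul (hxv'.sub (hVx p hp))
      convert this using 1
      · rfl
      · rfl
      · rfl
      simp only [Pi.neg_apply, Pi.div_apply, Pi.sub_apply, Pi.mul_apply, Pi.add_apply]
      rw [hcomp p hp]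
      simp only [Prod.mk.eta]
      field_simp
      ring
    have hcompt : ∀ p ∈ Ω, pdt v' p = fderiv ℝ u p (1, 0)
        - (u p * fderiv ℝ f p (1, 0) + v' p * fderiv ℝ f p (0, 1)) / f p := by
      intro p hp
      have hVp := hVek p hp
      have e1 : pdx u p = fderiv ℝ u p (1, 0) := pdx_eq_fderiv (hdu p hp)
      have e2 : pdt u p = fderiv ℝ u p (0, 1) := pdt_eq_fderiv (hdu p hp)
      have e3 : pdx f p = fderiv ℝ f p (1, 0) := pdx_eq_fderiv (hdf p hp)
      have e4 : pdt f p = fderiv ℝ f p (0, 1) := pdt_eq_fderiv (hdf p hp)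
      have hfne := hne p hp
      simp only [dzbar, hmul, hdiv, hinv, hconj, rzbar, Prod.mk.injEq, e1, e2, e3, e4] at hVp
      obtain ⟨h1, h2⟩ := hVp
      rw [show (fun q => v' q) = v' from rfl] at h1
      field_simp at h1
      have key' : pdt v' p * f p = fderiv ℝ u p (1, 0) * f p
          - (u p * fderiv ℝ f p (1, 0) + v' p * fderiv ℝ f p (0, 1)) := by
        have hf4 : (2 : ℝ) * f p ≠ 0 := mul_ne_zero (by norm_num) hfne
        apply mul_left_cancel₀ hf4
        linear_combination (-2) * h1
      have : pdt v' p = (fderiv ℝ u p (1, 0) * f p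
          - (u p * fderiv ℝ f p (1, 0) + v' p * fderiv ℝ f p (0, 1))) / f p := by
        rw [eq_div_iff hfne]; exact key'
      rw [this]
      field_simp
    have hwt : ∀ p ∈ Ω, HasDerivAt
        (fun s => f (p.1, s) * (v' (p.1, s) - v (p.1, s))) 0 p.2 := by
      intro p hp
      have hfne := hne p hp
      have htf := hasDerivAt_slice_t (hdf p hp)
      have htv' : HasDerivAt (fun s => v' (p.1, s)) (pdt v' p) p.2 := by
        have := hasDerivAt_slice_t (hdv' p hp)
        rwa [← pdt_eq_fderiv (hdv' p hp)] at this
      have := htf.mul (htv'.sub (hVt p hp))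
      convert this using 1
      · rfl
      · rfl
      · rfl
      simp only [Pi.neg_apply, Pi.div_apply, Pi.sub_apply, Pi.mul_apply, Pi.add_apply]
      rw [hcompt p hp]
      simp only [Prod.mk.eta]
      field_simp
      ring
    refine ⟨f (x₀, t₀) * (v' (x₀, t₀) - v (x₀, t₀)), fun p hp => ?_⟩
    have hp' : p.1 ∈ Set.Ioo a b ∧ p.2 ∈ Set.Ioo c d := by rw [hΩ] at hp; exact hp
    have hx0 : x₀ ∈ Set.Ioo a b := by rw [hΩ] at hz₀; exact hz₀.1
    have ht0 : t₀ ∈ Set.Ioo c d := by rw [hΩ] at hz₀; exact hz₀.2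
    have h1 : f (p.1, p.2) * (v' (p.1, p.2) - v (p.1, p.2))
        = f (x₀, p.2) * (v' (x₀, p.2) - v (x₀, p.2)) := by
      apply eq_on_of_hasDerivAt_zero (convex_Ioo a b)
        (h := fun s => f (s, p.2) * (v' (s, p.2) - v (s, p.2)))
        ?_ hp'.1 hx0
      intro s hs
      exact hwx (s, p.2) (by rw [hΩ]; exact ⟨hs, hp'.2⟩)
    have h2 : f (x₀, p.2) * (v' (x₀, p.2) - v (x₀, p.2))
        = f (x₀, t₀) * (v' (x₀, t₀) - v (x₀, t₀)) := by
      apply eq_on_of_hasDerivAt_zero (convex_Ioo c d)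
        (h := fun s => f (x₀, s) * (v' (x₀, s) - v (x₀, s)))
        ?_ hp'.2 ht0
      intro s hs
      exact hwt (x₀, s) (by rw [hΩ]; exact ⟨hx0, hs⟩)
    have hfne := hne p hp
    have : f p * (v' p - v p) = f (x₀, t₀) * (v' (x₀, t₀) - v (x₀, t₀)) := by
      rw [← h2, ← h1]
    field_simp
    linarith [this]
end
end
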